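/- arXiv:2209.10757 — 7 statements merged into one kernel-verified Lean document; each statement's English description precedes it below -/
import Mathlib

section
/- Every graded map f : ℚ → ℤ is equal to f_d, to f_d^{(1)}, or to f_d^{(-1)} for some real number d. -/
open scoped Pointwise

variable {K : Type*} [DivisionRing K]

/-- `V` is a total valuation ring of the division ring `K`. -/
def IsTVR (V : Subring K) : Prop := ∀ k : K, k ≠ 0 → k ∈ V ∨ k⁻¹ ∈ V

/-- The additive group generated by the elementwise products of two subsets, as a set. -/
def aprod (S T : Set K) : Set K := (AddSubgroup.closure (S * T) : Set K)

/-- `O_l(S) = {a ∈ K : aS ⊆ S}`. -/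
def Ol (S : Set K) : Set K := {a : K | ∀ x ∈ S, a * x ∈ S}

/-- `O_r(S) = {a ∈ K : Sa ⊆ S}`. -/
def Orr (S : Set K) : Set K := {a : K | ∀ x ∈ S, x * a ∈ S}

/-- `(J : I)_r = {a ∈ K : Ia ⊆ J}`. -/
def residR (J I : Set K) : Set K := {a : K | ∀ x ∈ I, x * a ∈ J}

/-- The Jacobson radical of a total valuation ring `W`, as a set:
`{x ∈ W : x = 0 ∨ x⁻¹ ∉ W}`. -/
def jacS (W : Set K) : Set K := {x : K | x ∈ W ∧ (x = 0 ∨ x⁻¹ ∉ W)}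

/-- `S⁻ = {c⁻¹ : 0 ≠ c ∈ S}`. -/
def invS (S : Set K) : Set K := {x : K | ∃ c ∈ S, c ≠ 0 ∧ x = c⁻¹}

/-- `S` is an additive subgroup of `K`. -/
def IsAddSubgrp (S : Set K) : Prop := (0 : K) ∈ S ∧ ∀ x ∈ S, ∀ y ∈ S, x - y ∈ S

/-- `*I = ⋂ {Wc : c ∈ K, I ⊆ Wc}` where `W = O_l(I)`. -/
def lstar (I : Set K) : Set K := ⋂ c ∈ {c : K | I ⊆ Ol I * {c}}, Ol I * {c}

/-- A family `(A_r)` of additive subgroups of `K` is a graded extension of `V0`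
with support the additive subgroup `H ⊆ ℚ`. -/
def IsGradedExtOn (H : Set ℚ) (V0 : Set K) (σ : ℚ → (K ≃+* K)) (A : ℚ → Set K) : Prop :=
  (∀ r ∈ H, IsAddSubgrp (A r)) ∧ A 0 = V0 ∧
  (∀ r ∈ H, A r ∪ (σ r '' invS (A (-r))) = Set.univ) ∧
  (∀ r ∈ H, ∀ s ∈ H, aprod (A r) (σ r '' A s) ⊆ A (r + s))

/-- `ℤr = {ir : i ∈ ℤ}` as a subset of `ℚ`. -/
def zmulSet (r : ℚ) : Set ℚ := {s : ℚ | ∃ i : ℤ, s = (i : ℚ) * r}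

/-- Graded extension of `V0` in `K[ℚ,σ]`. -/
def IsGradedExtQ (V0 : Set K) (σ : ℚ → (K ≃+* K)) (A : ℚ → Set K) : Prop :=
  IsGradedExtOn Set.univ V0 σ A

/-- `H_r` is a graded extension of `V0` in `K[X^r, X^{-r}; σ(r)]`. -/
def IsGradedExtHr (V0 : Set K) (σ : ℚ → (K ≃+* K)) (A : ℚ → Set K) (r : ℚ) : Prop :=
  IsGradedExtOn (zmulSet r) V0 σ A

/-- `H_r` is of Type (I). -/
def HrTypeI (σ : ℚ → (K ≃+* K)) (A : ℚ → Set K) (r : ℚ) : Prop :=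
  ∀ i j : ℤ, 0 < i → 0 < j →
    aprod (A ((i : ℚ) * r)) (σ ((i : ℚ) * r) '' A ((j : ℚ) * r)) = A (((i + j : ℤ) : ℚ) * r) ∧
    aprod (A (-((i : ℚ) * r))) (σ (-((i : ℚ) * r)) '' A (-((j : ℚ) * r)))
      = A (-(((i + j : ℤ) : ℚ) * r))

/-- The whole family `(A_r)_{r ∈ ℚ}` is of Type (I). -/
def FamTypeI (σ : ℚ → (K ≃+* K)) (A : ℚ → Set K) : Prop :=
  ∀ g h : ℚ, 0 < g → 0 < h →
    aprod (A g) (σ g '' A h) = A (g + h) ∧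
    aprod (A (-g)) (σ (-g) '' A (-h)) = A (-g - h)

/-- `M_0 = V`, `M_{ir} = A_r A_r^{σ(r)} ⋯ A_r^{σ((i-1)r)}`. -/
def Mir (V0 : Set K) (σ : ℚ → (K ≃+* K)) (A : ℚ → Set K) (r : ℚ) : ℕ → Set K
  | 0 => V0
  | 1 => A r
  | n + 2 => aprod (Mir V0 σ A r (n + 1)) (σ (((n + 1 : ℕ) : ℚ) * r) '' A r)

/-- `H_r` is of Type (a). -/
def HrTypeA (V0 : Set K) (σ : ℚ → (K ≃+* K)) (A : ℚ → Set K) (r : ℚ) : Prop :=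
  ∃ a : K, A r = V0 * {a} ∧ A r = {a} * (σ r '' V0) ∧ A (-r) = V0 * {σ (-r) a⁻¹}

/-- `H_r` is of Type (b). -/
def HrTypeB (σ : ℚ → (K ≃+* K)) (A : ℚ → Set K) (r : ℚ) : Prop :=
  ∃ a : K, A r = Ol (A r) * {a} ∧ {a} * (σ r '' Ol (A r)) ⊂ A r

/-- `H_r` is of Type (c). -/
def HrTypeC (σ : ℚ → (K ≃+* K)) (A : ℚ → Set K) (r : ℚ) : Prop :=
  ∃ a : K, A r = Ol (A r) * {a} ∧ A r ⊂ {a} * (σ r '' Ol (A r))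

/-- `H_r` is of Type (d). -/
def HrTypeD (σ : ℚ → (K ≃+* K)) (A : ℚ → Set K) (r : ℚ) : Prop :=
  ∃ a : K, A r = Ol (A r) * {a} ∧ A r = {a} * (σ r '' Ol (A r)) ∧
    A (-r) = jacS (Ol (A r)) * {σ (-r) a⁻¹} ∧
    aprod (jacS (Ol (A r))) (jacS (Ol (A r))) = jacS (Ol (A r))

/-- `H_r` is of Type (e). -/
def HrTypeE (σ : ℚ → (K ≃+* K)) (A : ℚ → Set K) (r : ℚ) : Prop :=
  ∃ a b : K, A r = Ol (A r) * {a} ∧ A r = {a} * (σ r '' Ol (A r)) ∧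
    A (-r) = jacS (Ol (A r)) * {σ (-r) a⁻¹} ∧
    jacS (Ol (A r)) = Ol (A r) * {b⁻¹}

/-- `H_r` is of Type (f). -/
def HrTypeF (A : ℚ → Set K) (r : ℚ) : Prop := A r ⊂ lstar (A r)

/-- `H_r` is of Type (g). -/
def HrTypeG (V0 : Set K) (σ : ℚ → (K ≃+* K)) (A : ℚ → Set K) (r : ℚ) : Prop :=
  lstar (A r) = A r ∧
    ∀ i : ℕ, 0 < i → ¬ ∃ c : K, lstar (Mir V0 σ A r i) = Ol (A r) * {c}

/-- `H_r` is of Type (h). -/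
def HrTypeH (V0 : Set K) (σ : ℚ → (K ≃+* K)) (A : ℚ → Set K) (r : ℚ) : Prop :=
  lstar (A r) = A r ∧
    ∃ i : ℕ, 0 < i ∧ ∃ c : K, lstar (Mir V0 σ A r i) = Ol (A r) * {c}

/-- A graded map `f : ℚ → ℤ`. -/
def IsGradedMap (f : ℚ → ℤ) : Prop :=
  f 0 = 0 ∧ (∀ s t : ℚ, f s + f t ≤ f (s + t)) ∧ (∀ s : ℚ, -1 ≤ f s + f (-s))

/-- Every graded map `f : ℚ → ℤ` is equal to `f_d`, to `f_d^{(1)}`, or to `f_d^{(-1)}`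
for some real number `d`. -/
theorem stmt1 (f : ℚ → ℤ) (hf : IsGradedMap f) :
    ∃ d : ℝ,
      (∀ r : ℚ, f r = ⌊(r : ℝ) * d⌋) ∨
      (∀ r : ℚ, 0 < r →
        ((r : ℝ) * d - 1 ≤ (f r : ℝ) ∧ (f r : ℝ) < (r : ℝ) * d) ∧ f (-r) = -f r - 1) ∨
      (∀ r : ℚ, 0 < r → f r = ⌊(r : ℝ) * d⌋ ∧ f (-r) = -⌊(r : ℝ) * d⌋ - 1) := by
  obtain ⟨hf0, hadd, hneg⟩ := hf
  have hle0 : ∀ s : ℚ, f s + f (-s) ≤ 0 := by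
    intro s
    have h := hadd s (-s)
    simpa [hf0] using h
  -- multiples
  have hmul : ∀ (n : ℕ) (s : ℚ), (n : ℤ) * f s ≤ f ((n : ℚ) * s) := by
    intro n s
    induction n with
    | zero => simp [hf0]
    | succ n ih =>
      have h := hadd ((n : ℚ) * s) s
      have e : ((n : ℚ) + 1) * s = (n : ℚ) * s + s := by ring
      push_cast
      rw [e]
      push_cast at ih
      linarith
  -- common multiple
  have hcommon : ∀ s t : ℚ, 0 < s → 0 < t →
      ∃ a b : ℕ, 0 < a ∧ 0 < b ∧ (b : ℚ) * s = (a : ℚ) * t := by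
    intro s t hs ht
    set q := s / t with hq
    have hqpos : 0 < q := div_pos hs ht
    refine ⟨q.num.toNat, q.den, ?_, q.pos, ?_⟩
    · have : 0 < q.num := Rat.num_pos.mpr hqpos
      omega
    · have h1 : (q.den : ℚ) * q = (q.num : ℚ) := by
        rw [mul_comm]
        exact_mod_cast Rat.mul_den_eq_num q
      have h2 : ((q.num.toNat : ℤ) : ℚ) = (q.num : ℚ) := by
        have : 0 < q.num := Rat.num_pos.mpr hqpos
        push_cast [Int.toNat_of_nonneg this.le]
        ring
      have hs' : q * t = s := div_mul_cancel₀ s ht.ne'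
      calc (q.den : ℚ) * s = (q.den : ℚ) * (q * t) := by rw [hs']
        _ = ((q.den : ℚ) * q) * t := by ring
        _ = (q.num.toNat : ℚ) * t := by rw [h1]; push_cast at h2 ⊢; rw [h2]
  -- the set of slopes
  set S : Set ℝ := {x : ℝ | ∃ r : ℚ, 0 < r ∧ x = (f r : ℝ) / (r : ℝ)} with hS
  -- key rational cross inequalities
  have key1 : ∀ s t : ℚ, 0 < s → 0 < t → (t : ℝ) * (f s : ℝ) ≤ (s : ℝ) * (f t : ℝ) + s := by
    intro s t hs ht
    obtain ⟨a, b, ha, hb, hab⟩ := hcommon s t hs ht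
    have h1 : (b : ℤ) * f s ≤ f ((b : ℚ) * s) := hmul b s
    have h2 : (a : ℤ) * f (-t) ≤ f ((a : ℚ) * (-t)) := by
      have := hmul a (-t); exact this
    have h3 : f ((b : ℚ) * s) + f (-((b : ℚ) * s)) ≤ 0 := hle0 _
    have h4 : -1 ≤ f t + f (-t) := hneg t
    have he : (a : ℚ) * (-t) = -((b : ℚ) * s) := by rw [hab]; ring
    rw [he] at h2
    -- so b * f s ≤ a * f t + a in ℤ
    have h5 : (b : ℤ) * f s ≤ (a : ℤ) * f t + a := by nlinarith [h2, h3, h1]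
    -- transfer to ℝ using b * s = a * t
    have hb' : (0 : ℝ) < (b : ℝ) := by exact_mod_cast hb
    have hab' : (b : ℝ) * (s : ℝ) = (a : ℝ) * (t : ℝ) := by exact_mod_cast hab
    have h5' : (b : ℝ) * (f s : ℝ) ≤ (a : ℝ) * (f t : ℝ) + a := by exact_mod_cast h5
    have ht' : (0 : ℝ) < (t : ℝ) := by exact_mod_cast ht
    have h6 := mul_le_mul_of_nonneg_left h5' ht'.le
    have h7 : (b : ℝ) * ((t : ℝ) * (f s : ℝ)) ≤ (b : ℝ) * ((s : ℝ) * (f t : ℝ) + s) := by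
      have e : (t : ℝ) * ((a : ℝ) * (f t : ℝ) + a) = (b : ℝ) * ((s : ℝ) * (f t : ℝ) + s) := by
        linear_combination ((f t : ℝ) + 1) * hab'.symm
      linarith [h6, e]
    exact le_of_mul_le_mul_left h7 hb'
  have key2 : ∀ s t : ℚ, 0 < s → 0 < t → (t : ℝ) * (f s : ℝ) ≤ -((s : ℝ) * (f (-t) : ℝ)) := by
    intro s t hs ht
    obtain ⟨a, b, ha, hb, hab⟩ := hcommon s t hs ht
    have h1 : (b : ℤ) * f s ≤ f ((b : ℚ) * s) := hmul b s
    have h2 : (a : ℤ) * f (-t) ≤ f ((a : ℚ) * (-t)) := hmul a (-t)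
    have h3 : f ((b : ℚ) * s) + f (-((b : ℚ) * s)) ≤ 0 := hle0 _
    have he : (a : ℚ) * (-t) = -((b : ℚ) * s) := by rw [hab]; ring
    rw [he] at h2
    have h5 : (b : ℤ) * f s ≤ -((a : ℤ) * f (-t)) := by linarith
    have hb' : (0 : ℝ) < (b : ℝ) := by exact_mod_cast hb
    have hab' : (b : ℝ) * (s : ℝ) = (a : ℝ) * (t : ℝ) := by exact_mod_cast hab
    have h5' : (b : ℝ) * (f s : ℝ) ≤ -((a : ℝ) * (f (-t) : ℝ)) := by exact_mod_cast h5
    have ht' : (0 : ℝ) < (t : ℝ) := by exact_mod_cast ht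
    have h6 := mul_le_mul_of_nonneg_left h5' ht'.le
    have h7 : (b : ℝ) * ((t : ℝ) * (f s : ℝ)) ≤ (b : ℝ) * (-((s : ℝ) * (f (-t) : ℝ))) := by
      have e : (t : ℝ) * (-((a : ℝ) * (f (-t) : ℝ))) = (b : ℝ) * (-((s : ℝ) * (f (-t) : ℝ))) := by
        linear_combination (-(f (-t) : ℝ)) * hab'.symm
      linarith [h6, e]
    exact le_of_mul_le_mul_left h7 hb'
  have hSne : S.Nonempty := ⟨(f 1 : ℝ) / 1, 1, one_pos, by norm_num⟩
  have hSbdd : BddAbove S := by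
    refine ⟨(f 1 : ℝ) + 1, ?_⟩
    rintro x ⟨r, hr, rfl⟩
    have := key1 r 1 hr one_pos
    have hr' : (0 : ℝ) < (r : ℝ) := by exact_mod_cast hr
    rw [div_le_iff₀ hr']
    push_cast at this ⊢
    nlinarith
  set d : ℝ := sSup S with hd
  refine ⟨d, ?_⟩
  have hdub : ∀ r : ℚ, 0 < r → (f r : ℝ) ≤ (r : ℝ) * d := by
    intro r hr
    have hr' : (0 : ℝ) < (r : ℝ) := by exact_mod_cast hr
    have : (f r : ℝ) / r ≤ d := le_csSup hSbdd ⟨r, hr, rfl⟩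
    rw [div_le_iff₀ hr'] at this
    linarith
  have hdlb1 : ∀ t : ℚ, 0 < t → (t : ℝ) * d ≤ (f t : ℝ) + 1 := by
    intro t ht
    have ht' : (0 : ℝ) < (t : ℝ) := by exact_mod_cast ht
    have hcs : d ≤ ((f t : ℝ) + 1) / t := by
      apply csSup_le hSne
      rintro x ⟨r, hr, rfl⟩
      have hr' : (0 : ℝ) < (r : ℝ) := by exact_mod_cast hr
      rw [div_le_div_iff₀ hr' ht']
      have := key1 r t hr ht
      nlinarith
    rw [le_div_iff₀ ht'] at hcs
    linarith
  have hdlb2 : ∀ t : ℚ, 0 < t → (t : ℝ) * d ≤ -(f (-t) : ℝ) := by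
    intro t ht
    have ht' : (0 : ℝ) < (t : ℝ) := by exact_mod_cast ht
    have hcs : d ≤ (-(f (-t) : ℝ)) / t := by
      apply csSup_le hSne
      rintro x ⟨r, hr, rfl⟩
      have hr' : (0 : ℝ) < (r : ℝ) := by exact_mod_cast hr
      rw [div_le_div_iff₀ hr' ht']
      have := key2 r t hr ht
      nlinarith
    rw [le_div_iff₀ ht'] at hcs
    linarith
  -- master bounds
  have hub : ∀ r : ℚ, (f r : ℝ) ≤ (r : ℝ) * d := by
    intro r
    rcases lt_trichotomy r 0 with h | h | h
    · have h2 := hdlb2 (-r) (by linarith)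
      push_cast at h2
      simp only [neg_neg] at h2
      linarith
    · subst h; simp [hf0]
    · exact hdub r h
  have hlb : ∀ r : ℚ, (r : ℝ) * d - 1 ≤ (f r : ℝ) := by
    intro r
    rcases lt_trichotomy r 0 with h | h | h
    · have h1 := hub (-r)
      have h2 := hneg (-r)
      simp only [neg_neg] at h2
      push_cast at h1
      have h2' : (-1 : ℝ) ≤ (f (-r) : ℝ) + (f r : ℝ) := by exact_mod_cast h2
      linarith
    · subst h; simp [hf0]
    · have := hdlb1 r h; linarith
  -- floor at non-integer points
  have hfl : ∀ r : ℚ, (∀ m : ℤ, (m : ℝ) ≠ (r : ℝ) * d) → f r = ⌊(r : ℝ) * d⌋ := by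
    intro r hni
    have h1 := hub r
    have h2 := hlb r
    have hne : (f r : ℝ) ≠ (r : ℝ) * d := hni (f r)
    have hlt : (f r : ℝ) < (r : ℝ) * d := lt_of_le_of_ne h1 hne
    have hfloorlt : (⌊(r : ℝ) * d⌋ : ℝ) < (r : ℝ) * d := by
      rcases eq_or_lt_of_le (Int.floor_le ((r : ℝ) * d)) with he | hl
      · exact absurd he (hni _)
      · exact hl
    have hle : f r ≤ ⌊(r : ℝ) * d⌋ := Int.le_floor.mpr h1
    have hge : ⌊(r : ℝ) * d⌋ ≤ f r := by
      by_contra hcon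
      push_neg at hcon
      have : (f r : ℝ) + 1 ≤ (⌊(r : ℝ) * d⌋ : ℝ) := by exact_mod_cast hcon
      linarith
    omega
  -- integer points
  have hSpt : ∀ r : ℚ, ∀ m : ℤ, (m : ℝ) = (r : ℝ) * d → f r = m ∨ f r = m - 1 := by
    intro r m hm
    have h1 := hub r
    have h2 := hlb r
    rw [← hm] at h1 h2
    have h1' : f r ≤ m := by exact_mod_cast h1
    have h2' : m - 1 ≤ f r := by
      have : ((m : ℝ) - 1) ≤ (f r : ℝ) := by linarith
      exact_mod_cast this
    omega
  -- trick: if f r < rd strictly then f (-r) = - f r - 1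
  have htrick : ∀ r : ℚ, (f r : ℝ) < (r : ℝ) * d → f (-r) = -f r - 1 := by
    intro r hlt
    have h1 := hub (-r)
    push_cast at h1
    have h2 := hneg r
    have h3 := hle0 r
    have : f (-r) ≠ -f r := by
      intro he
      rw [he] at h1
      push_cast at h1
      linarith
    omega
  by_cases hP : ∃ s : ℚ, 0 < s ∧ ∃ m : ℤ, (m : ℝ) = (s : ℝ) * d ∧ f s = m - 1
  · -- Type f_d^{(1)}
    obtain ⟨s, hs, m, hm, hfs⟩ := hP
    -- at every positive integer point, f is deficient
    have hdefic : ∀ t : ℚ, 0 < t → ∀ k : ℤ, (k : ℝ) = (t : ℝ) * d → f t = k - 1 := by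
      intro t ht k hk
      obtain ⟨a, b, ha, hb, hab⟩ := hcommon s t hs ht
      have hab' : ((b : ℝ)) * (s : ℝ) = (a : ℝ) * (t : ℝ) := by exact_mod_cast hab
      have hbmak : (b : ℤ) * m = (a : ℤ) * k := by
        have : ((b : ℝ)) * (m : ℝ) = (a : ℝ) * (k : ℝ) := by
          rw [hm, hk]; linear_combination d * hab'
        exact_mod_cast this
      -- f (-s) = -m
      have hfns : f (-s) = -m := by
        have h1 := hub (-s)
        push_cast at h1
        have h1' : (f (-s) : ℝ) ≤ -(m : ℝ) := by rw [hm]; linarith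
        have h1'' : f (-s) ≤ -m := by exact_mod_cast h1'
        have h2 := hneg s
        omega
      -- f (s - b*s) ≥ -(b-1)*m
      have hsub : ((b : ℤ) - 1) * f (-s) ≤ f (s - (b : ℚ) * s) := by
        have h := hmul (b - 1) (-s)
        have e : ((b - 1 : ℕ) : ℚ) * (-s) = s - (b : ℚ) * s := by
          push_cast [Nat.cast_sub hb]
          ring
        rw [e] at h
        have e2 : ((b - 1 : ℕ) : ℤ) = (b : ℤ) - 1 := by omega
        rw [e2] at h
        exact h
      -- f (b*s) ≤ b*m - 1
      have hfu : f ((b : ℚ) * s) ≤ (b : ℤ) * m - 1 := by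
        have h := hadd ((b : ℚ) * s) (s - (b : ℚ) * s)
        have e : (b : ℚ) * s + (s - (b : ℚ) * s) = s := by ring
        rw [e] at h
        rw [hfns] at hsub
        linarith
      -- a * f t ≤ f (a * t) = f (b*s) ≤ a*k - 1
      have hft : (a : ℤ) * f t ≤ (a : ℤ) * k - 1 := by
        have h := hmul a t
        rw [← hab] at h
        linarith
      have := hSpt t k hk
      rcases this with h | h
      · exfalso; rw [h] at hft; linarith
      · exact h
    refine Or.inr (Or.inl ?_)
    intro r hr
    have hstrict : (f r : ℝ) < (r : ℝ) * d := by
      by_cases hint : ∃ k : ℤ, (k : ℝ) = (r : ℝ) * d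
      · obtain ⟨k, hk⟩ := hint
        have := hdefic r hr k hk
        rw [this]
        push_cast
        rw [← hk]
        push_cast
        linarith
      · push_neg at hint
        exact lt_of_le_of_ne (hub r) (hint (f r))
    exact ⟨⟨hlb r, hstrict⟩, htrick r hstrict⟩
  · by_cases hN : ∃ s : ℚ, 0 < s ∧ ∃ m : ℤ, (m : ℝ) = (s : ℝ) * d ∧ f (-s) = -m - 1
    · -- Type f_d^{(-1)}
      obtain ⟨s, hs, m, hm, hfns⟩ := hN
      push_neg at hP
      have hval : ∀ t : ℚ, 0 < t → ∀ k : ℤ, (k : ℝ) = (t : ℝ) * d → f t = k := by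
        intro t ht k hk
        rcases hSpt t k hk with h | h
        · exact h
        · exact absurd h (hP t ht k hk)
      have hfs : f s = m := hval s hs m hm
      have hnegval : ∀ t : ℚ, 0 < t → ∀ k : ℤ, (k : ℝ) = (t : ℝ) * d → f (-t) = -k - 1 := by
        intro t ht k hk
        obtain ⟨a, b, ha, hb, hab⟩ := hcommon s t hs ht
        have hab' : ((b : ℝ)) * (s : ℝ) = (a : ℝ) * (t : ℝ) := by exact_mod_cast hab
        have hbmak : (b : ℤ) * m = (a : ℤ) * k := by
          have : ((b : ℝ)) * (m : ℝ) = (a : ℝ) * (k : ℝ) := by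
            rw [hm, hk]; linear_combination d * hab'
          exact_mod_cast this
        -- f (b*s - s) ≥ (b-1)*m
        have hsub : ((b : ℤ) - 1) * f s ≤ f ((b : ℚ) * s - s) := by
          have h := hmul (b - 1) s
          have e : ((b - 1 : ℕ) : ℚ) * s = (b : ℚ) * s - s := by
            push_cast [Nat.cast_sub hb]
            ring
          rw [e] at h
          have e2 : ((b - 1 : ℕ) : ℤ) = (b : ℤ) - 1 := by omega
          rw [e2] at h
          exact h
        -- f (-(b*s)) ≤ -b*m - 1
        have hfu : f (-((b : ℚ) * s)) ≤ -((b : ℤ) * m) - 1 := by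
          have h := hadd (-((b : ℚ) * s)) ((b : ℚ) * s - s)
          have e : -((b : ℚ) * s) + ((b : ℚ) * s - s) = -s := by ring
          rw [e] at h
          rw [hfs] at hsub
          linarith
        have hft : (a : ℤ) * f (-t) ≤ -((a : ℤ) * k) - 1 := by
          have h := hmul a (-t)
          have e : (a : ℚ) * (-t) = -((b : ℚ) * s) := by rw [hab]; ring
          rw [e] at h
          linarith
        have hkneg : ((-k : ℤ) : ℝ) = ((-t : ℚ) : ℝ) * d := by push_cast; linear_combination -hk
        rcases hSpt (-t) (-k) hkneg with h | h
        · exfalso; rw [h] at hft; linarith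
        · omega
      refine Or.inr (Or.inr ?_)
      intro r hr
      by_cases hint : ∃ k : ℤ, (k : ℝ) = (r : ℝ) * d
      · obtain ⟨k, hk⟩ := hint
        have hfloor : ⌊(r : ℝ) * d⌋ = k := by rw [← hk]; exact Int.floor_intCast k
        rw [hfloor]
        exact ⟨hval r hr k hk, hnegval r hr k hk⟩
      · push_neg at hint
        have h1 : f r = ⌊(r : ℝ) * d⌋ := hfl r hint
        have hstrict : (f r : ℝ) < (r : ℝ) * d := lt_of_le_of_ne (hub r) (hint (f r))
        have h2 := htrick r hstrict
        rw [← h1]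
        exact ⟨h1.symm ▸ rfl, by omega⟩
    · -- Type f_d
      push_neg at hP
      push_neg at hN
      refine Or.inl ?_
      intro r
      by_cases hint : ∃ k : ℤ, (k : ℝ) = (r : ℝ) * d
      · obtain ⟨k, hk⟩ := hint
        have hfloor : ⌊(r : ℝ) * d⌋ = k := by rw [← hk]; exact Int.floor_intCast k
        rw [hfloor]
        rcases lt_trichotomy r 0 with h | h | h
        · have hkneg : ((-k : ℤ) : ℝ) = ((-r : ℚ) : ℝ) * d := by push_cast; linear_combination -hk
          have := hN (-r) (by linarith) (-k) hkneg
          have hc : ¬ (f (-(-r)) = -(-k) - 1) := this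
          simp only [neg_neg] at hc
          rcases hSpt r k hk with h' | h'
          · exact h'
          · exfalso; apply hc; omega
        · subst h
          have : (k : ℝ) = 0 := by rw [hk]; push_cast; ring
          have hk0 : k = 0 := by exact_mod_cast this
          rw [hk0, hf0]
        · rcases hSpt r k hk with h' | h'
          · exact h'
          · exact absurd h' (hP r h k hk)
      · push_neg at hint
        exact hfl r hint
end

section
/- Let (A_r)_{r∈ℚ} be a graded extension of V in K[ℚ,σ] and let s ∈ ℚ with s > 0. If H_s is of Type (II), then H_{s/n} is of Type (II) for every positive integer n. -/
open scoped Pointwise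

variable {K : Type*} [DivisionRing K]

/-- If `H_s` is of Type (II), then `H_{s/n}` is of Type (II) for every positive integer `n`. -/
theorem stmt5 (V : Subring K) (hV : IsTVR V) (hVK : (V : Set K) ≠ Set.univ)
    (σ : ℚ → (K ≃+* K)) (hσ : ∀ r s : ℚ, σ (r + s) = (σ r).trans (σ s))
    (A : ℚ → Set K) (hA : IsGradedExtQ (V : Set K) σ A)
    (s : ℚ) (hs : 0 < s) (hII : ¬ HrTypeI σ A s) :
    ∀ n : ℕ, 0 < n → ¬ HrTypeI σ A (s / (n : ℚ)) := by
  intro n hn hI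
  apply hII
  intro i j hi hj
  have hn' : (0 : ℤ) < (n : ℤ) := Int.natCast_pos.mpr hn
  have hnq : (n : ℚ) ≠ 0 := Nat.cast_ne_zero.mpr hn.ne'
  have e : ∀ k : ℤ, ((k * (n : ℤ) : ℤ) : ℚ) * (s / (n : ℚ)) = (k : ℚ) * s := by
    intro k; push_cast; field_simp
  have h := hI (i * n) (j * n) (mul_pos hi hn') (mul_pos hj hn')
  rw [show i * (n : ℤ) + j * n = (i + j) * n from by ring] at h
  rw [e i, e j, e (i + j)] at h
  exact h
end

section
/- Let (A_r)_{r∈ℚ} be a graded extension of V in K[ℚ,σ] of Type (II). Then there exists a positive integer k₀ such that H_{1/k₀} is a graded extension of V in K[X^{1/k₀}, X^{-1/k₀}; σ(1/k₀)] of Type (II). -/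
open scoped Pointwise

variable {K : Type*} [DivisionRing K]

/-- If `(A_r)` is of Type (II), then there is a positive integer `k₀` such that `H_{1/k₀}`
is a graded extension of `V` in `K[X^{1/k₀}, X^{-1/k₀}; σ(1/k₀)]` of Type (II). -/
theorem stmt7 (V : Subring K) (hV : IsTVR V) (hVK : (V : Set K) ≠ Set.univ)
    (σ : ℚ → (K ≃+* K)) (hσ : ∀ r s : ℚ, σ (r + s) = (σ r).trans (σ s))
    (A : ℚ → Set K) (hA : IsGradedExtQ (V : Set K) σ A)
    (hII : ¬ FamTypeI σ A) :
    ∃ k₀ : ℕ, 0 < k₀ ∧ IsGradedExtHr (V : Set K) σ A (1 / (k₀ : ℚ)) ∧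
      ¬ HrTypeI σ A (1 / (k₀ : ℚ)) := by
  simp only [FamTypeI, not_forall, Classical.not_imp] at hII
  obtain ⟨g, h, hg, hh, hne⟩ := hII
  obtain ⟨hA1, hA2, hA3, hA4⟩ := hA
  refine ⟨g.den * h.den, by positivity, ?_, ?_⟩
  · exact ⟨fun r _ => hA1 r trivial, hA2, fun r _ => hA3 r trivial,
      fun r _ s _ => hA4 r trivial s trivial⟩
  · intro hT
    set r : ℚ := 1 / ((g.den * h.den : ℕ) : ℚ) with hr
    have hgd : ((g.den : ℚ)) ≠ 0 := by positivity
    have hhd : ((h.den : ℚ)) ≠ 0 := by positivity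
    have e1 : ((g.num * (h.den : ℤ) : ℤ) : ℚ) * r = g := by
      rw [hr]
      push_cast
      rw [mul_one_div, mul_div_mul_right _ _ hhd, Rat.num_div_den]
    have e2 : ((h.num * (g.den : ℤ) : ℤ) : ℚ) * r = h := by
      rw [hr]
      push_cast
      rw [mul_one_div, mul_comm ((g.den : ℚ)) ((h.den : ℚ)),
        mul_div_mul_right _ _ hgd, Rat.num_div_den]
    have e3 : (((g.num * (h.den : ℤ) + h.num * (g.den : ℤ) : ℤ)) : ℚ) * r = g + h := by
      push_cast
      rw [add_mul]
      push_cast at e1 e2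
      rw [e1, e2]
    have hi : (0 : ℤ) < g.num * (h.den : ℤ) :=
      mul_pos (Rat.num_pos.mpr hg) (by exact_mod_cast h.pos)
    have hj : (0 : ℤ) < h.num * (g.den : ℤ) :=
      mul_pos (Rat.num_pos.mpr hh) (by exact_mod_cast g.pos)
    have hT' := hT (g.num * (h.den : ℤ)) (h.num * (g.den : ℤ)) hi hj
    rw [e1, e2, e3] at hT'
    rw [show (-g - h : ℚ) = -(g + h) by ring] at hne
    exact hne hT'
end

section
/- Let r ∈ ℚ, r > 0, and let H_r = (A_{ir})_{i∈ℤ} be a graded extension of V in K[X^r, X^{-r}; σ(r)] of Type (e) with O_l(A_r) = W. Then: (i) for every i ∈ ℤ there exists β_{ir} ∈ K with WA_{ir} = Wβ_{ir} = β_{ir}W^{σ(ir)}; (ii) the family (WA_{ir})_{i∈ℤ} is a graded extension of W in K[X^r, X^{-r}; σ(r)] of Type (e). -/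
open scoped Pointwise

variable {K : Type*} [DivisionRing K]

namespace Aux9

def mkSub {S : Set K} (h : IsAddSubgrp S) : AddSubgroup K where
  carrier := S
  zero_mem' := h.1
  add_mem' := by
    intro a b ha hb
    have hnb : (0:K) - b ∈ S := h.2 0 h.1 b hb
    have := h.2 a ha _ hnb
    simpa using this
  neg_mem' := by intro a ha; simpa using h.2 0 h.1 a ha

theorem sg_add {S : Set K} (h : IsAddSubgrp S) {x y : K}
    (hx : x ∈ S) (hy : y ∈ S) : x + y ∈ S := (mkSub h).add_mem hx hy

theorem sg_neg {S : Set K} (h : IsAddSubgrp S) {x : K}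
    (hx : x ∈ S) : -x ∈ S := (mkSub h).neg_mem hx

theorem aprod_isAddSubgrp (S T : Set K) : IsAddSubgrp (aprod S T) :=
  ⟨AddSubgroup.zero_mem _, fun _ hx _ hy => AddSubgroup.sub_mem _ hx hy⟩

theorem mul_mem_aprod {S T : Set K} {x y : K} (hx : x ∈ S) (hy : y ∈ T) :
    x * y ∈ aprod S T := AddSubgroup.subset_closure (Set.mul_mem_mul hx hy)

theorem aprod_subset {S T U : Set K} (hU : IsAddSubgrp U)
    (h : ∀ x ∈ S, ∀ y ∈ T, x * y ∈ U) : aprod S T ⊆ U := by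
  intro z hz
  have : AddSubgroup.closure (S * T) ≤ (mkSub hU) := by
    rw [AddSubgroup.closure_le]
    rintro w ⟨x, hx, y, hy, rfl⟩
    exact h x hx y hy
  exact this hz

/-- induction for `z ∈ aprod S T` with postmultiplication. -/
theorem aprod_mul_mem {S T U : Set K} (hU : IsAddSubgrp U) {c : K}
    (h : ∀ x ∈ S, ∀ y ∈ T, x * y * c ∈ U) : ∀ z ∈ aprod S T, z * c ∈ U := by
  intro z hz
  induction hz using AddSubgroup.closure_induction'' with
  | mem w hw => obtain ⟨x, hx, y, hy, rfl⟩ := hw; exact h x hx y hy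
  | neg_mem w hw =>
      obtain ⟨x, hx, y, hy, rfl⟩ := hw
      simpa [neg_mul] using sg_neg hU (h x hx y hy)
  | zero => simpa using hU.1
  | add a b _ _ ha hb => simpa [add_mul] using sg_add hU ha hb

theorem mem_aprod_mul {S T U : Set K} (hU : IsAddSubgrp U) {c : K}
    (h : ∀ x ∈ S, ∀ y ∈ T, c * (x * y) ∈ U) : ∀ z ∈ aprod S T, c * z ∈ U := by
  intro z hz
  induction hz using AddSubgroup.closure_induction'' with
  | mem w hw => obtain ⟨x, hx, y, hy, rfl⟩ := hw; exact h x hx y hy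
  | neg_mem w hw =>
      obtain ⟨x, hx, y, hy, rfl⟩ := hw
      simpa [mul_neg] using sg_neg hU (h x hx y hy)
  | zero => simpa using hU.1
  | add a b _ _ ha hb => simpa [mul_add] using sg_add hU ha hb

end Aux9

namespace Aux9

structure TVR (W : Set K) : Prop where
  one_mem : (1:K) ∈ W
  mul_mem : ∀ {x y : K}, x ∈ W → y ∈ W → x * y ∈ W
  sub_mem : ∀ {x y : K}, x ∈ W → y ∈ W → x - y ∈ W
  tvr : ∀ k : K, k ≠ 0 → k ∈ W ∨ k⁻¹ ∈ W

namespace TVR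

variable {W : Set K} (h : TVR W)
set_option linter.unusedSectionVars false
include h

theorem zero_mem : (0:K) ∈ W := by simpa using h.sub_mem h.one_mem h.one_mem

theorem neg_mem {x : K} (hx : x ∈ W) : -x ∈ W := by simpa using h.sub_mem h.zero_mem hx

theorem mem_compl_inv {k : K} (hk : k ≠ 0) (hnk : k ∉ W) : k⁻¹ ∈ W :=
  (h.tvr k hk).resolve_left hnk

theorem jac_def {x : K} : x ∈ jacS W ↔ x ∈ W ∧ (x = 0 ∨ x⁻¹ ∉ W) := Iff.rfl

theorem jac_zero : (0:K) ∈ jacS W := ⟨h.zero_mem, Or.inl rfl⟩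

theorem not_unit_of_jac {j : K} (hj : j ∈ jacS W) (hj0 : j ≠ 0) : j⁻¹ ∉ W :=
  hj.2.resolve_left hj0

theorem unit_of_not_jac {w : K} (hw : w ∈ W) (hnj : w ∉ jacS W) :
    w ≠ 0 ∧ w⁻¹ ∈ W := by
  by_contra hc
  push_neg at hc
  rcases Classical.em (w = 0) with h0 | h0
  · exact hnj ⟨hw, Or.inl h0⟩
  · exact hnj ⟨hw, Or.inr (hc h0)⟩

theorem jac_left {x j : K} (hx : x ∈ W) (hj : j ∈ jacS W) : x * j ∈ jacS W := by
  refine ⟨h.mul_mem hx hj.1, ?_⟩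
  rcases Classical.em (x * j = 0) with h0 | h0
  · exact Or.inl h0
  · have hjne : j ≠ 0 := fun hh => h0 (by simp [hh])
    have hxne : x ≠ 0 := fun hh => h0 (by simp [hh])
    refine Or.inr fun hmem => ?_
    have : j⁻¹ ∈ W := by
      have : (x * j)⁻¹ * x ∈ W := h.mul_mem hmem hx
      simpa [mul_inv_rev, mul_assoc, inv_mul_cancel₀ hxne] using this
    exact (h.not_unit_of_jac hj hjne) this

theorem jac_right {x j : K} (hj : j ∈ jacS W) (hx : x ∈ W) : j * x ∈ jacS W := by
  refine ⟨h.mul_mem hj.1 hx, ?_⟩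
  rcases Classical.em (j * x = 0) with h0 | h0
  · exact Or.inl h0
  · have hjne : j ≠ 0 := fun hh => h0 (by simp [hh])
    have hxne : x ≠ 0 := fun hh => h0 (by simp [hh])
    refine Or.inr fun hmem => ?_
    have : j⁻¹ ∈ W := by
      have : x * ((j * x)⁻¹) ∈ W := h.mul_mem hx hmem
      simpa [mul_inv_rev, ← mul_assoc, mul_inv_cancel₀ hxne] using this
    exact (h.not_unit_of_jac hj hjne) this

theorem jac_neg {j : K} (hj : j ∈ jacS W) : -j ∈ jacS W := by
  refine ⟨h.neg_mem hj.1, ?_⟩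
  rcases hj.2 with h0 | h0
  · exact Or.inl (by simp [h0])
  · refine Or.inr fun hm => h0 ?_
    have hm' : -j⁻¹ ∈ W := by simpa [inv_neg] using hm
    simpa using h.neg_mem hm'

theorem jac_sub {x y : K} (hx : x ∈ jacS W) (hy : y ∈ jacS W) :
    x - y ∈ jacS W := by
  rcases Classical.em (x = 0) with h0 | h0
  · simpa [h0] using h.jac_neg hy
  rcases Classical.em (y = 0) with h1 | h1
  · simpa [h1] using hx
  rcases Classical.em (x - y = 0) with h2 | h2
  · simp only [h2]; exact h.jac_zero
  have hxW := hx.1; have hyW := hy.1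
  have hxinv : x⁻¹ ∉ W := h.not_unit_of_jac hx h0
  have hyinv : y⁻¹ ∉ W := h.not_unit_of_jac hy h1
  rcases h.tvr (x⁻¹ * y) (by simp [h0, h1]) with hc | hc
  · -- x⁻¹ y ∈ W, so x⁻¹ (x - y) = 1 - x⁻¹ y ∈ W
    have hz : x⁻¹ * (x - y) ∈ W := by
      have : (1 : K) - x⁻¹ * y ∈ W := h.sub_mem h.one_mem hc
      simpa [mul_sub, inv_mul_cancel₀ h0] using this
    refine ⟨h.sub_mem hxW hyW, Or.inr fun hm => ?_⟩
    have : x⁻¹ ∈ W := by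
      have := h.mul_mem hz hm
      simpa [mul_assoc, mul_inv_cancel₀ h2] using this
    exact hxinv this
  · have hc' : y⁻¹ * x ∈ W := by simpa [mul_inv_rev] using hc
    have hz : y⁻¹ * (x - y) ∈ W := by
      have : y⁻¹ * x - 1 ∈ W := h.sub_mem hc' h.one_mem
      simpa [mul_sub, inv_mul_cancel₀ h1] using this
    refine ⟨h.sub_mem hxW hyW, Or.inr fun hm => ?_⟩
    have : y⁻¹ ∈ W := by
      have := h.mul_mem hz hm
      simpa [mul_assoc, mul_inv_cancel₀ h2] using this
    exact hyinv this

theorem jac_subgrp : IsAddSubgrp (jacS W) :=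
  ⟨h.jac_zero, fun _ hx _ hy => h.jac_sub hx hy⟩

end TVR

end Aux9

namespace Aux9

theorem mem_mulsing {S : Set K} {c z : K} : z ∈ S * {c} ↔ ∃ x ∈ S, x * c = z := by
  simp [Set.mul_singleton]

theorem mem_singmul {S : Set K} {c z : K} : z ∈ {c} * S ↔ ∃ x ∈ S, c * x = z := by
  simp [Set.singleton_mul]

structure LSub (W M : Set K) : Prop where
  zero : (0:K) ∈ M
  sub : ∀ {x y : K}, x ∈ M → y ∈ M → x - y ∈ M
  smul : ∀ {w x : K}, w ∈ W → x ∈ M → w * x ∈ M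

variable {W : Set K}

theorem LSub.self (h : TVR W) : LSub W W :=
  ⟨h.zero_mem, fun hx hy => h.sub_mem hx hy, fun hw hx => h.mul_mem hw hx⟩

theorem LSub.mulsing (h : TVR W) (c : K) : LSub W (W * {c}) := by
  refine ⟨?_, ?_, ?_⟩
  · exact mem_mulsing.2 ⟨0, h.zero_mem, by simp⟩
  · intro x y hx hy
    obtain ⟨x', hx', rfl⟩ := mem_mulsing.1 hx
    obtain ⟨y', hy', rfl⟩ := mem_mulsing.1 hy
    exact mem_mulsing.2 ⟨x' - y', h.sub_mem hx' hy', by rw [sub_mul]⟩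
  · intro w x hw hx
    obtain ⟨x', hx', rfl⟩ := mem_mulsing.1 hx
    exact mem_mulsing.2 ⟨w * x', h.mul_mem hw hx', by rw [mul_assoc]⟩

theorem LSub.mul_sing {M : Set K} (hM : LSub W M) (c : K) : LSub W (M * {c}) := by
  refine ⟨?_, ?_, ?_⟩
  · exact mem_mulsing.2 ⟨0, hM.zero, by simp⟩
  · intro x y hx hy
    obtain ⟨x', hx', rfl⟩ := mem_mulsing.1 hx
    obtain ⟨y', hy', rfl⟩ := mem_mulsing.1 hy
    exact mem_mulsing.2 ⟨x' - y', hM.sub hx' hy', by rw [sub_mul]⟩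
  · intro w x hw hx
    obtain ⟨x', hx', rfl⟩ := mem_mulsing.1 hx
    exact mem_mulsing.2 ⟨w * x', hM.smul hw hx', by rw [mul_assoc]⟩

theorem lsub_comp (h : TVR W) {M N : Set K} (hM : LSub W M) (hN : LSub W N) :
    M ⊆ N ∨ N ⊆ M := by
  by_cases hMN : M ⊆ N
  · exact Or.inl hMN
  · right
    obtain ⟨m, hm, hmN⟩ := Set.not_subset.1 hMN
    intro n hn
    have hm0 : m ≠ 0 := fun hh => hmN (hh ▸ hN.zero)
    rcases Classical.em (n = 0) with h0 | h0
    · exact h0 ▸ hM.zero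
    rcases h.tvr (n * m⁻¹) (by simp [h0, hm0]) with hc | hc
    · have : (n * m⁻¹) * m ∈ M := hM.smul hc hm
      simpa [mul_assoc, inv_mul_cancel₀ hm0] using this
    · exfalso
      have hc' : m * n⁻¹ ∈ W := by simpa [mul_inv_rev] using hc
      have : (m * n⁻¹) * n ∈ N := hN.smul hc' hn
      exact hmN (by simpa [mul_assoc, inv_mul_cancel₀ h0] using this)

theorem lsub_step (h : TVR W) {b : K} (hb : b ≠ 0) (hJ : jacS W = W * {b⁻¹})
    {M : Set K} (hM : LSub W M) (h1 : W ⊆ M) (h2 : M ⊆ W * {b}) :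
    M = W ∨ M = W * {b} := by
  by_cases hc : ∀ x ∈ M, x * b⁻¹ ∈ jacS W
  · left
    refine Set.Subset.antisymm (fun x hx => ?_) h1
    have := hc x hx
    rw [hJ] at this
    obtain ⟨w, hw, hwx⟩ := mem_mulsing.1 this
    have : w = x := mul_right_cancel₀ (inv_ne_zero hb) hwx
    exact this ▸ hw
  · right
    push_neg at hc
    obtain ⟨x, hx, hxj⟩ := hc
    obtain ⟨w0, hw0, rfl⟩ := mem_mulsing.1 (h2 hx)
    have hxb : w0 * b * b⁻¹ = w0 := by rw [mul_assoc, mul_inv_cancel₀ hb, mul_one]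
    have hw0j : w0 ∉ jacS W := by rw [← hxb] at hw0; simpa [hxb] using hxj
    obtain ⟨hw00, hw0inv⟩ := h.unit_of_not_jac hw0 hw0j
    refine Set.Subset.antisymm h2 (fun z hz => ?_)
    obtain ⟨w, hw, rfl⟩ := mem_mulsing.1 hz
    have : (w * w0⁻¹) * (w0 * b) ∈ M := hM.smul (h.mul_mem hw hw0inv) hx
    simpa [mul_assoc, inv_mul_cancel_left₀ hw00] using this

theorem lsub_classify (h : TVR W) {b : K} (hb : b ≠ 0) (hJ : jacS W = W * {b⁻¹}) :
    ∀ n : ℕ, ∀ M : Set K, LSub W M → W ⊆ M → M ⊆ W * {b ^ n} →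
    ∃ j ≤ n, M = W * {b ^ j} := by
  intro n
  induction n with
  | zero =>
      intro M hM h1 h2
      refine ⟨0, le_refl _, Set.Subset.antisymm (by simpa using h2) ?_⟩
      simpa using h1
  | succ n ih =>
      intro M hM h1 h2
      rcases lsub_comp h hM (LSub.mulsing h (b ^ n)) with hc | hc
      · obtain ⟨j, hj, hMj⟩ := ih M hM h1 hc
        exact ⟨j, le_trans hj (Nat.le_succ n), hMj⟩
      · -- W * {b^n} ⊆ M ⊆ W * {b^(n+1)}; consider N = M * (b^n)⁻¹
        have hbn : (b : K) ^ n ≠ 0 := pow_ne_zero _ hb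
        set N : Set K := M * {(b ^ n)⁻¹} with hN
        have hNsub : LSub W N := hM.mul_sing _
        have hN1 : W ⊆ N := by
          intro w hw
          refine mem_mulsing.2 ⟨w * b ^ n, hc (mem_mulsing.2 ⟨w, hw, rfl⟩), ?_⟩
          rw [mul_assoc, mul_inv_cancel₀ hbn, mul_one]
        have hN2 : N ⊆ W * {b} := by
          intro z hz
          obtain ⟨m, hm, rfl⟩ := mem_mulsing.1 hz
          obtain ⟨w, hw, rfl⟩ := mem_mulsing.1 (h2 hm)
          refine mem_mulsing.2 ⟨w, hw, ?_⟩
          rw [pow_succ', mul_assoc, mul_assoc, mul_inv_cancel₀ hbn, mul_one]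
        rcases lsub_step h hb hJ hNsub hN1 hN2 with hNW | hNW
        · refine ⟨n, Nat.le_succ n, Set.Subset.antisymm ?_ ?_⟩
          · intro m hm
            have : m * (b ^ n)⁻¹ ∈ W := hNW ▸ mem_mulsing.2 ⟨m, hm, rfl⟩
            refine mem_mulsing.2 ⟨m * (b ^ n)⁻¹, this, ?_⟩
            rw [mul_assoc, inv_mul_cancel₀ hbn, mul_one]
          · intro z hz
            obtain ⟨w, hw, rfl⟩ := mem_mulsing.1 hz
            exact hc (mem_mulsing.2 ⟨w, hw, rfl⟩)
        · refine ⟨n + 1, le_refl _, Set.Subset.antisymm h2 ?_⟩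
          intro z hz
          obtain ⟨w, hw, rfl⟩ := mem_mulsing.1 hz
          have : w * b ∈ N := hNW ▸ mem_mulsing.2 ⟨w, hw, rfl⟩
          obtain ⟨m, hm, hmw⟩ := mem_mulsing.1 this
          have : m = w * b ^ (n+1) := by
            have := congrArg (fun t => t * b ^ n) hmw
            simp only [mul_assoc, inv_mul_cancel₀ hbn, mul_one] at this
            rw [pow_succ']
            exact this
          exact this ▸ hm

end Aux9

namespace Aux9

variable {W : Set K}

theorem conjW_iff (h : TVR W) {τ : K ≃+* K} {u : K} (hu0 : u ≠ 0)
    (huW : {u} * (τ '' W) = W * {u}) : ∀ x : K, x ∈ W ↔ u * τ x * u⁻¹ ∈ W := by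
  intro x
  constructor
  · intro hx
    have : u * τ x ∈ ({u} : Set K) * (τ '' W) := mem_singmul.2 ⟨τ x, ⟨x, hx, rfl⟩, rfl⟩
    rw [huW] at this
    obtain ⟨w, hw, hwu⟩ := mem_mulsing.1 this
    have : u * τ x * u⁻¹ = w := by rw [← hwu, mul_assoc, mul_inv_cancel₀ hu0, mul_one]
    exact this ▸ hw
  · intro hx
    have : (u * τ x * u⁻¹) * u ∈ W * {u} := mem_mulsing.2 ⟨_, hx, rfl⟩
    rw [← huW] at this
    obtain ⟨y, hy, hyu⟩ := mem_singmul.1 this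
    obtain ⟨w, hw, rfl⟩ := hy
    have h1 : (u * τ x * u⁻¹) * u = u * τ x := by
      rw [mul_assoc, inv_mul_cancel₀ hu0, mul_one]
    rw [h1] at hyu
    have : w = x := τ.injective (mul_left_cancel₀ hu0 hyu)
    exact this ▸ hw

theorem conj_inv_eq {τ : K ≃+* K} {u : K} (hu0 : u ≠ 0) (x : K) :
    (u * τ x * u⁻¹)⁻¹ = u * τ x⁻¹ * u⁻¹ := by
  rw [map_inv₀, mul_inv_rev, mul_inv_rev, inv_inv, mul_assoc]

theorem conjJ_iff (h : TVR W) {τ : K ≃+* K} {u : K} (hu0 : u ≠ 0)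
    (huW : {u} * (τ '' W) = W * {u}) : ∀ x : K, x ∈ jacS W ↔ u * τ x * u⁻¹ ∈ jacS W := by
  have hW := conjW_iff h hu0 huW
  intro x
  constructor
  · rintro ⟨hxW, hx0⟩
    refine ⟨(hW x).1 hxW, ?_⟩
    rcases hx0 with h0 | h0
    · left; simp [h0]
    · right; intro hm
      rw [conj_inv_eq hu0] at hm
      exact h0 ((hW x⁻¹).2 hm)
  · rintro ⟨hxW, hx0⟩
    refine ⟨(hW x).2 hxW, ?_⟩
    rcases hx0 with h0 | h0
    · left
      have : τ x = 0 := by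
        by_contra hτ
        exact (mul_ne_zero (mul_ne_zero hu0 hτ) (inv_ne_zero hu0)) h0
      exact (EmbeddingLike.map_eq_zero_iff).1 this
    · right; intro hxi
      apply h0
      rw [conj_inv_eq hu0]
      exact (hW x⁻¹).1 hxi

section BComm

variable (h : TVR W) {b : K} (hb : b ≠ 0) (hJ : jacS W = W * {b⁻¹})
set_option linter.unusedSectionVars false
include h hb hJ

theorem binv_mem_jac : b⁻¹ ∈ jacS W := hJ ▸ mem_mulsing.2 ⟨1, h.one_mem, one_mul _⟩

theorem bjac_mem : ∀ j ∈ jacS W, b * j ∈ W := by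
  intro j hj
  rcases Classical.em (j = 0) with h0 | h0
  · simpa [h0] using h.zero_mem
  by_contra hbj
  have hbj0 : b * j ≠ 0 := mul_ne_zero hb h0
  have hinvW : (b * j)⁻¹ ∈ W := h.mem_compl_inv hbj0 hbj
  have : (b * j)⁻¹ ∈ jacS W := ⟨hinvW, Or.inr (by rw [inv_inv]; exact hbj)⟩
  rw [hJ] at this
  obtain ⟨w, hw, hww⟩ := mem_mulsing.1 this
  have : w = j⁻¹ := by
    have h2 : w * b⁻¹ = j⁻¹ * b⁻¹ := by rw [hww, mul_inv_rev]
    exact mul_right_cancel₀ (inv_ne_zero hb) h2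
  exact h.not_unit_of_jac hj h0 (this ▸ hw)

theorem conj_b_mem : ∀ w ∈ W, b * w * b⁻¹ ∈ W := by
  intro w hw
  have : b * (w * b⁻¹) ∈ W := bjac_mem h hb hJ _ (h.jac_left hw (binv_mem_jac h hb hJ))
  rwa [← mul_assoc] at this

theorem conj_binv_mem : ∀ w ∈ W, b⁻¹ * w * b ∈ W := by
  intro w hw
  have hmem : b⁻¹ * w ∈ jacS W := h.jac_right (binv_mem_jac h hb hJ) hw
  rw [hJ] at hmem
  obtain ⟨w', hw', hww⟩ := mem_mulsing.1 hmem
  have : b⁻¹ * w * b = w' := by rw [← hww, mul_assoc, inv_mul_cancel₀ hb, mul_one]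
  exact this ▸ hw'

end BComm

def CommW (W : Set K) (c : K) : Prop :=
  (∀ w ∈ W, c * w * c⁻¹ ∈ W) ∧ (∀ w ∈ W, c⁻¹ * w * c ∈ W)

theorem CommW.one : CommW W 1 := ⟨fun w hw => by simpa using hw, fun w hw => by simpa using hw⟩

theorem CommW.inv {c : K} (hc : CommW W c) : CommW W c⁻¹ :=
  ⟨by simpa [inv_inv] using hc.2, by simpa [inv_inv] using hc.1⟩

theorem CommW.mul {c d : K} (hc : CommW W c) (hd : CommW W d) : CommW W (c * d) := by
  constructor
  · intro w hw
    have : c * (d * w * d⁻¹) * c⁻¹ ∈ W := hc.1 _ (hd.1 w hw)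
    have heq : c * d * w * (c * d)⁻¹ = c * (d * w * d⁻¹) * c⁻¹ := by
      rw [mul_inv_rev]; simp [mul_assoc]
    rw [heq]; exact this
  · intro w hw
    have : d⁻¹ * (c⁻¹ * w * c) * d ∈ W := hd.2 _ (hc.2 w hw)
    have heq : (c * d)⁻¹ * w * (c * d) = d⁻¹ * (c⁻¹ * w * c) * d := by
      rw [mul_inv_rev]; simp [mul_assoc]
    rw [heq]; exact this

theorem CommW.pow {c : K} (hc : CommW W c) : ∀ n : ℕ, CommW W (c ^ n) := by
  intro n
  induction n with
  | zero => simpa [pow_zero] using (CommW.one : CommW W 1)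
  | succ n ih => rw [pow_succ]; exact ih.mul hc

theorem CommW.sing_comm {c : K} (hc : CommW W c) (hc0 : c ≠ 0) :
    W * {c} = {c} * W := by
  ext z
  constructor
  · intro hz
    obtain ⟨w, hw, rfl⟩ := mem_mulsing.1 hz
    refine mem_singmul.2 ⟨c⁻¹ * w * c, hc.2 w hw, ?_⟩
    rw [← mul_assoc, ← mul_assoc, mul_inv_cancel₀ hc0, one_mul]
  · intro hz
    obtain ⟨w, hw, rfl⟩ := mem_singmul.1 hz
    refine mem_mulsing.2 ⟨c * w * c⁻¹, hc.1 w hw, ?_⟩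
    rw [mul_assoc, inv_mul_cancel₀ hc0, mul_one]

theorem commW_b (h : TVR W) {b : K} (hb : b ≠ 0) (hJ : jacS W = W * {b⁻¹}) :
    CommW W b := ⟨conj_b_mem h hb hJ, conj_binv_mem h hb hJ⟩

end Aux9

namespace Aux9

theorem aprod_twist_mem {S T U : Set K} (hU : IsAddSubgrp U) (τ : K ≃+* K) (c : K)
    (h : ∀ x ∈ S, ∀ y ∈ T, c * τ (x * y) ∈ U) : ∀ z ∈ aprod S T, c * τ z ∈ U := by
  intro z hz
  induction hz using AddSubgroup.closure_induction'' with
  | mem w hw => obtain ⟨x, hx, y, hy, rfl⟩ := hw; exact h x hx y hy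
  | neg_mem w hw =>
      obtain ⟨x, hx, y, hy, rfl⟩ := hw
      simpa [map_neg, mul_neg] using sg_neg hU (h x hx y hy)
  | zero => simpa using hU.1
  | add p q _ _ hp hq => simpa [map_add, mul_add] using sg_add hU hp hq

theorem isAddSubgrp_W {W : Set K} (h : TVR W) : IsAddSubgrp W :=
  ⟨h.zero_mem, fun _ hx _ hy => h.sub_mem hx hy⟩

theorem isAddSubgrp_singleton_zero : IsAddSubgrp ({0} : Set K) :=
  ⟨rfl, by rintro x rfl y rfl; simp⟩

end Aux9
/-- If `H_r` is a graded extension of `V` of Type (e) with `O_l(A_r) = W`, then (i) for every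
`i ∈ ℤ` there is `β` with `WA_{ir} = Wβ = βW^{σ(ir)}`, and (ii) `(WA_{ir})_{i∈ℤ}` is a graded
extension of `W` of Type (e). -/
theorem stmt9 (V : Subring K) (hV : IsTVR V) (hVK : (V : Set K) ≠ Set.univ)
    (σ : ℚ → (K ≃+* K)) (hσ : ∀ r s : ℚ, σ (r + s) = (σ r).trans (σ s))
    (A : ℚ → Set K) (r : ℚ) (hr : 0 < r)
    (hA : IsGradedExtHr (V : Set K) σ A r)
    (hE : HrTypeE σ A r)
    (W : Set K) (hW : W = Ol (A r)) :
    (∀ i : ℤ, ∃ β : K,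
       aprod W (A ((i : ℚ) * r)) = W * {β} ∧ W * {β} = {β} * (σ ((i : ℚ) * r) '' W)) ∧
    IsGradedExtHr W σ (fun s => aprod W (A s)) r ∧
    HrTypeE σ (fun s => aprod W (A s)) r := by
  classical
  obtain ⟨h1, h2, h3, h4⟩ := hA
  obtain ⟨a, b, hAr1, hAr2, hAmr, hJb⟩ := hE
  rw [← hW] at hAr1 hAr2 hAmr hJb
  -- sigma basics
  have hσfun : ∀ s t : ℚ, ∀ x : K, σ t (σ s x) = σ (s + t) x := by
    intro s t x; rw [hσ s t]; rfl
  have hσ0 : ∀ x : K, σ 0 x = x := by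
    intro x
    have h0 : σ 0 (σ 0 x) = σ 0 x := by rw [hσfun 0 0 x]; norm_num
    exact (σ 0).injective h0
  have hσback : ∀ s : ℚ, ∀ x : K, σ (-s) (σ s x) = x := by
    intro s x; rw [hσfun]; simp [hσ0]
  have hσfwd : ∀ s : ℚ, ∀ x : K, σ s (σ (-s) x) = x := by
    intro s x; rw [hσfun]; simp [hσ0]
  have hσne : ∀ s : ℚ, ∀ x : K, x ≠ 0 → σ s x ≠ 0 := by
    intro s x hx h0
    exact hx (by simpa using EmbeddingLike.map_eq_zero_iff.1 h0)
  have hcomp : ∀ s t : ℚ, ∀ S : Set K, σ t '' (σ s '' S) = σ (s + t) '' S := by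
    intro s t S
    rw [← Set.image_comp]
    exact Set.image_congr' (fun x => hσfun s t x)
  have himg0 : ∀ S : Set K, σ 0 '' S = S := by
    intro S
    apply Set.eq_of_subset_of_subset
    · rintro z ⟨x, hx, rfl⟩; rw [hσ0]; exact hx
    · intro x hx; exact ⟨x, hx, hσ0 x⟩
  -- zmulSet memberships
  have hz0 : (0:ℚ) ∈ zmulSet r := ⟨0, by norm_num⟩
  have hzr : r ∈ zmulSet r := ⟨1, by norm_num⟩
  have hzmr : -r ∈ zmulSet r := ⟨-1, by push_cast; ring⟩
  have hzn : ∀ n : ℕ, ((n:ℚ) * r) ∈ zmulSet r := fun n => ⟨(n:ℤ), by push_cast; ring⟩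
  have hzmn : ∀ n : ℕ, (-(n:ℚ) * r) ∈ zmulSet r := fun n => ⟨-(n:ℤ), by push_cast; ring⟩
  -- product rule elementwise
  have hmul : ∀ s ∈ zmulSet r, ∀ t ∈ zmulSet r, ∀ x ∈ A s, ∀ y ∈ A t,
      x * σ s y ∈ A (s + t) := by
    intro s hs t ht x hx y hy
    exact h4 s hs t ht (Aux9.mul_mem_aprod hx ⟨y, hy, rfl⟩)
  -- V ⊆ W and W is a TVR
  have hVA : ∀ v ∈ (V : Set K), ∀ x ∈ A r, v * x ∈ A r := by
    intro v hv x hx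
    have hv0 : v ∈ A 0 := h2.symm ▸ hv
    have := hmul 0 hz0 r hzr v hv0 x hx
    rw [hσ0, zero_add] at this
    exact this
  have hVW : (V : Set K) ⊆ W := by
    intro v hv; rw [hW]; exact fun x hx => hVA v hv x hx
  have hWmem : ∀ w, w ∈ W ↔ ∀ x ∈ A r, w * x ∈ A r := by
    intro w; rw [hW]; exact Iff.rfl
  have hArSub : IsAddSubgrp (A r) := h1 r hzr
  have hAmrSub : IsAddSubgrp (A (-r)) := h1 (-r) hzmr
  have hTV : Aux9.TVR W := by
    refine ⟨?_, ?_, ?_, ?_⟩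
    · exact (hWmem 1).2 (fun x hx => by simpa using hx)
    · intro x y hx hy
      refine (hWmem _).2 (fun z hz => ?_)
      rw [mul_assoc]
      exact (hWmem x).1 hx _ ((hWmem y).1 hy z hz)
    · intro x y hx hy
      refine (hWmem _).2 (fun z hz => ?_)
      rw [sub_mul]
      exact hArSub.2 _ ((hWmem x).1 hx z hz) _ ((hWmem y).1 hy z hz)
    · intro k hk
      rcases hV k hk with h | h
      · exact Or.inl (hVW h)
      · exact Or.inr (hVW h)
  have haAr : a ∈ A r := hAr1 ▸ Aux9.mem_mulsing.2 ⟨1, hTV.one_mem, one_mul a⟩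
  have hbinvJ : b⁻¹ ∈ jacS W := hJb ▸ Aux9.mem_mulsing.2 ⟨1, hTV.one_mem, one_mul _⟩
  -- a ≠ 0
  have ha0 : a ≠ 0 := by
    rintro rfl
    have hA10 : A r ⊆ {0} := by
      intro x hx
      obtain ⟨w, _, rfl⟩ := Aux9.mem_mulsing.1 (hAr1 ▸ hx)
      simp
    have hA20 : A (-r) ⊆ {0} := by
      intro x hx
      obtain ⟨w, _, rfl⟩ := Aux9.mem_mulsing.1 (hAmr ▸ hx)
      simp
    have h1u : (1:K) ∈ A r ∪ σ r '' invS (A (-r)) := (h3 r hzr).symm ▸ Set.mem_univ 1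
    rcases h1u with h | h
    · exact one_ne_zero (Set.mem_singleton_iff.1 (hA10 h))
    · obtain ⟨y, ⟨c, hc, hc0, rfl⟩, _⟩ := h
      exact hc0 (Set.mem_singleton_iff.1 (hA20 hc))
  -- basic facts about B s = aprod W (A s)
  have hBsub : ∀ s : ℚ, IsAddSubgrp (aprod W (A s)) := fun s => Aux9.aprod_isAddSubgrp _ _
  have hAB : ∀ s : ℚ, A s ⊆ aprod W (A s) := by
    intro s x hx
    have := Aux9.mul_mem_aprod hTV.one_mem hx
    rwa [one_mul] at this
  have hWB : ∀ s : ℚ, ∀ w ∈ W, ∀ z ∈ aprod W (A s), w * z ∈ aprod W (A s) := by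
    intro s w hw
    exact Aux9.mem_aprod_mul (hBsub s) (fun x hx y hy => by
      rw [← mul_assoc]; exact Aux9.mul_mem_aprod (hTV.mul_mem hw hx) hy)
  have hBL : ∀ s : ℚ, Aux9.LSub W (aprod W (A s)) :=
    fun s => ⟨(hBsub s).1, fun hx hy => (hBsub s).2 _ hx _ hy, fun hw hx => hWB s _ hw _ hx⟩
  have hB0 : aprod W (A 0) = W := by
    apply Set.eq_of_subset_of_subset
    · apply Aux9.aprod_subset (Aux9.isAddSubgrp_W hTV)
      intro x hx y hy
      exact hTV.mul_mem hx (hVW (h2 ▸ hy))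
    · intro w hw
      have : w * 1 ∈ aprod W (A 0) :=
        Aux9.mul_mem_aprod hw (h2.symm ▸ (Subring.one_mem V : (1:K) ∈ V))
      rwa [mul_one] at this
  have hBA : ∀ s ∈ zmulSet r, ∀ t ∈ zmulSet r, ∀ y ∈ A t, ∀ z ∈ aprod W (A s),
      z * σ s y ∈ aprod W (A (s + t)) := by
    intro s hs t ht y hy
    exact Aux9.aprod_mul_mem (hBsub _) (fun x hx x' hx' => by
      rw [mul_assoc]; exact Aux9.mul_mem_aprod hx (hmul s hs t ht x' hx' y hy))
  -- the sequence a_n = a σ_r(a) ⋯ σ_{(n-1)r}(a)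
  obtain ⟨aa, haa0, haaS⟩ : ∃ aa : ℕ → K, aa 0 = 1 ∧ ∀ n, aa (n+1) = aa n * σ ((n:ℚ)*r) a :=
    ⟨fun n => Nat.rec 1 (fun m p => p * σ ((m:ℚ)*r) a) n, rfl, fun n => rfl⟩
  have haan0 : ∀ n, aa n ≠ 0 := by
    intro n; induction n with
    | zero => rw [haa0]; exact one_ne_zero
    | succ n ih => rw [haaS]; exact mul_ne_zero ih (hσne _ _ ha0)
  have haamem : ∀ n : ℕ, aa n ∈ A ((n:ℚ) * r) := by
    intro n; induction n with
    | zero =>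
        have h00 : ((0:ℕ):ℚ) * r = 0 := by norm_num
        rw [h00, h2, haa0]; exact Subring.one_mem V
    | succ n ih =>
        have hmem := hmul ((n:ℚ)*r) (hzn n) r hzr (aa n) ih a haAr
        have hq : (n:ℚ)*r + r = ((n+1:ℕ):ℚ)*r := by push_cast; ring
        rw [hq] at hmem
        rw [haaS]
        exact hmem
  have haaS' : ∀ n, aa (n+1) = a * σ r (aa n) := by
    intro n; induction n with
    | zero => simp [haaS, haa0, hσ0]
    | succ n ih =>
        have hq : ((n+1:ℕ):ℚ) * r = (n:ℚ)*r + r := by push_cast; ring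
        calc aa (n+1+1) = aa (n+1) * σ (((n+1:ℕ):ℚ)*r) a := haaS (n+1)
          _ = (a * σ r (aa n)) * σ r (σ ((n:ℚ)*r) a) := by
              rw [ih, hσfun ((n:ℚ)*r) r a, hq]
          _ = a * (σ r (aa n) * σ r (σ ((n:ℚ)*r) a)) := by rw [mul_assoc]
          _ = a * σ r (aa n * σ ((n:ℚ)*r) a) := by rw [map_mul]
          _ = a * σ r (aa (n+1)) := by rw [← haaS n]
  have hconj : ∀ n : ℕ, W * {aa n} = {aa n} * (σ ((n:ℚ) * r) '' W) := by
    intro n; induction n with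
    | zero =>
        have h00 : ((0:ℕ):ℚ) * r = 0 := by norm_num
        rw [haa0, h00, himg0]
        simp
    | succ n ih =>
        calc W * {aa (n+1)} = (W * {aa n}) * {σ ((n:ℚ)*r) a} := by
              rw [mul_assoc, Set.singleton_mul_singleton, ← haaS]
          _ = {aa n} * ((σ ((n:ℚ)*r) '' W) * {σ ((n:ℚ)*r) a}) := by rw [ih, mul_assoc]
          _ = {aa n} * (σ ((n:ℚ)*r) '' (W * {a})) := by
              rw [Set.image_mul, Set.image_singleton]
          _ = {aa n} * ({σ ((n:ℚ)*r) a} * (σ ((n:ℚ)*r) '' (σ r '' W))) := by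
              rw [← hAr1, hAr2, Set.image_mul, Set.image_singleton]
          _ = {aa (n+1)} * (σ (((n+1:ℕ):ℚ) * r) '' W) := by
              have hq2 : r + (n:ℚ)*r = ((n+1:ℕ):ℚ)*r := by push_cast; ring
              rw [hcomp r ((n:ℚ)*r) W, ← mul_assoc, Set.singleton_mul_singleton, ← haaS, hq2]
  -- degenerate case b = 0 : then W = K
  have huniv : b = 0 → ∀ s : ℚ, ∃ β : K, aprod W (A s) = W * {β} ∧
      W * {β} = {β} * (σ s '' W) := by
    intro hb s
    have hW0 : W * {(0:K)} = {0} := by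
      apply Set.eq_of_subset_of_subset
      · intro z hz; obtain ⟨w, _, rfl⟩ := Aux9.mem_mulsing.1 hz; simp
      · intro z hz
        rw [Set.mem_singleton_iff.1 hz]
        exact Aux9.mem_mulsing.2 ⟨1, hTV.one_mem, by simp⟩
    have hJ0 : jacS W = {0} := by rw [hJb, hb, inv_zero, hW0]
    have hWu : W = Set.univ := by
      apply Set.eq_univ_of_forall
      intro k
      rcases Classical.em (k = 0) with h0 | h0
      · rw [h0]; exact hTV.zero_mem
      by_cases hkW : k ∈ W
      · exact hkW
      have hkinv : k⁻¹ ∈ W := hTV.mem_compl_inv h0 hkW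
      have : k⁻¹ ∈ jacS W := ⟨hkinv, Or.inr (by rw [inv_inv]; exact hkW)⟩
      rw [hJ0, Set.mem_singleton_iff, inv_eq_zero] at this
      exact absurd this h0
    have himgW : σ s '' W = Set.univ := by
      rw [hWu, Set.image_univ]
      exact Set.range_eq_univ.2 (σ s).surjective
    by_cases hA0 : A s ⊆ {0}
    · refine ⟨0, ?_, ?_⟩
      · rw [hW0]
        apply Set.eq_of_subset_of_subset
        · apply Aux9.aprod_subset Aux9.isAddSubgrp_singleton_zero
          intro x _ y hy
          rw [Set.mem_singleton_iff.1 (hA0 hy)]; simp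
        · intro z hz
          rw [Set.mem_singleton_iff.1 hz]
          exact (Aux9.aprod_isAddSubgrp W (A s)).1
      · rw [hW0]
        apply Set.eq_of_subset_of_subset
        · intro z hz
          rw [Set.mem_singleton_iff.1 hz]
          exact Aux9.mem_singmul.2 ⟨σ s 1, ⟨1, hTV.one_mem, rfl⟩, by simp⟩
        · intro z hz
          obtain ⟨x, _, rfl⟩ := Aux9.mem_singmul.1 hz
          simp
    · obtain ⟨t, ht, ht0⟩ := Set.not_subset.1 hA0
      have ht0' : t ≠ 0 := fun hh => ht0 (by rw [hh]; rfl)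
      have hBu : aprod W (A s) = Set.univ := by
        apply Set.eq_univ_of_forall
        intro z
        have : (z * t⁻¹) * t ∈ aprod W (A s) :=
          Aux9.mul_mem_aprod (by rw [hWu]; trivial) ht
        rwa [mul_assoc, inv_mul_cancel₀ ht0', mul_one] at this
      have hW1 : W * {(1:K)} = Set.univ := by rw [Set.mul_singleton]; simp [hWu]
      refine ⟨1, by rw [hBu, hW1], ?_⟩
      rw [hW1, himgW]
      apply Set.eq_of_subset_of_subset
      · intro z _
        exact Aux9.mem_singmul.2 ⟨z, trivial, one_mul z⟩
      · intro _ _; trivial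
  -- positive indices
  have hpos : ∀ n : ℕ, ∃ β : K, aprod W (A ((n:ℚ) * r)) = W * {β} ∧
      W * {β} = {β} * (σ ((n:ℚ) * r) '' W) := by
    intro n
    rcases Classical.em (b = 0) with hb | hb
    · exact huniv hb _
    have hcb : Aux9.CommW W b := Aux9.commW_b hTV hb hJb
    -- upper bound chain
    have hDb : ∀ m : ℕ, ∀ z ∈ aprod W (A ((m:ℚ)*r)), z * (aa m)⁻¹ ∈ W * {b ^ m} := by
      intro m
      induction m with
      | zero =>
          intro z hz
          have h00 : ((0:ℕ):ℚ) * r = 0 := by norm_num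
          rw [h00, hB0] at hz
          rw [haa0, inv_one, mul_one, pow_zero]
          exact Aux9.mem_mulsing.2 ⟨z, hz, mul_one z⟩
      | succ m ih =>
          intro z hz
          set s : ℚ := ((m+1:ℕ):ℚ) * r with hs
          set u : K := aa (m+1) with hu
          have hu0 : u ≠ 0 := haan0 (m+1)
          set j : K := σ (-s) (u⁻¹ * b⁻¹ * u) with hj
          have hjJ : j ∈ jacS W := by
            have hiff := Aux9.conjJ_iff hTV hu0 (hconj (m+1)).symm j
            apply hiff.2
            have hσj : σ s j = u⁻¹ * b⁻¹ * u := hσfwd s _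
            have hcalc : u * (u⁻¹ * b⁻¹ * u) * u⁻¹ = b⁻¹ := by
              simp only [mul_assoc, mul_inv_cancel₀ hu0, mul_one]
              rw [mul_inv_cancel_left₀ hu0]
            rw [hσj, hcalc]
            exact hbinvJ
          have hjc : j * σ (-r) a⁻¹ ∈ A (-r) :=
            hAmr ▸ Aux9.mem_mulsing.2 ⟨j, hjJ, rfl⟩
          have helem : z * σ s (j * σ (-r) a⁻¹) ∈ aprod W (A (s + -r)) :=
            hBA s (by rw [hs]; exact hzn (m+1)) (-r) hzmr _ hjc z hz
          have hq3 : s + -r = (m:ℚ) * r := by rw [hs]; push_cast; ring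
          rw [hq3] at helem
          have hih := ih _ helem
          -- rewrite the element
          have hslot : z * σ s (j * σ (-r) a⁻¹) * (aa m)⁻¹ = z * u⁻¹ * b⁻¹ := by
            have h1' : σ s (j * σ (-r) a⁻¹) = (u⁻¹ * b⁻¹ * u) * (σ ((m:ℚ)*r) a)⁻¹ := by
              rw [map_mul, hσfwd s _, hσfun (-r) s a⁻¹]
              have : -r + s = (m:ℚ) * r := by rw [hs]; push_cast; ring
              rw [this, map_inv₀]
            rw [h1']
            have h2' : u = aa m * σ ((m:ℚ)*r) a := haaS m
            rw [h2']
            have hm0 : aa m ≠ 0 := haan0 m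
            have hsm0 : σ ((m:ℚ)*r) a ≠ 0 := hσne _ _ ha0
            simp [mul_inv_rev, mul_assoc, mul_inv_cancel_left₀, inv_mul_cancel_left₀,
              hm0, hsm0]
          rw [hslot] at hih
          -- conclude
          have : (z * u⁻¹ * b⁻¹) * b ∈ (W * {b ^ m}) * {b} :=
            Set.mul_mem_mul hih rfl
          have helt : (z * u⁻¹ * b⁻¹) * b = z * u⁻¹ := by
            rw [mul_assoc, inv_mul_cancel₀ hb, mul_one]
          rw [helt, mul_assoc, Set.singleton_mul_singleton, ← pow_succ] at this
          exact this
    -- classification of D = B_n (aa n)⁻¹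
    set D : Set K := (aprod W (A ((n:ℚ)*r))) * {(aa n)⁻¹} with hD
    have hDL : Aux9.LSub W D := (hBL _).mul_sing _
    have hDW : W ⊆ D := by
      intro w hw
      refine Aux9.mem_mulsing.2 ⟨w * aa n, Aux9.mul_mem_aprod hw (haamem n), ?_⟩
      rw [mul_assoc, mul_inv_cancel₀ (haan0 n), mul_one]
    have hDub : D ⊆ W * {b ^ n} := by
      intro z hz
      obtain ⟨x, hx, rfl⟩ := Aux9.mem_mulsing.1 hz
      exact hDb n x hx
    obtain ⟨jj, hjjn, hDeq⟩ := Aux9.lsub_classify hTV hb hJb n D hDL hDW hDub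
    refine ⟨b ^ jj * aa n, ?_, ?_⟩
    · apply Set.eq_of_subset_of_subset
      · intro z hz
        have hmem : z * (aa n)⁻¹ ∈ D := Aux9.mem_mulsing.2 ⟨z, hz, rfl⟩
        rw [hDeq] at hmem
        obtain ⟨w, hw, hww⟩ := Aux9.mem_mulsing.1 hmem
        refine Aux9.mem_mulsing.2 ⟨w, hw, ?_⟩
        rw [← mul_assoc, hww, mul_assoc, inv_mul_cancel₀ (haan0 n), mul_one]
      · intro z hz
        obtain ⟨w, hw, rfl⟩ := Aux9.mem_mulsing.1 hz
        have h1' : w * b ^ jj ∈ D := hDeq ▸ Aux9.mem_mulsing.2 ⟨w, hw, rfl⟩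
        obtain ⟨x, hx, hxx⟩ := Aux9.mem_mulsing.1 h1'
        have hxw : x = w * (b ^ jj * aa n) := by
          rw [← mul_assoc, ← hxx, mul_assoc, inv_mul_cancel₀ (haan0 n), mul_one]
        rw [hxw] at hx
        exact hx
    · calc W * {b ^ jj * aa n} = (W * {b ^ jj}) * {aa n} := by
            rw [mul_assoc, Set.singleton_mul_singleton]
        _ = ({b ^ jj} * W) * {aa n} := by rw [(hcb.pow jj).sing_comm (pow_ne_zero _ hb)]
        _ = {b ^ jj} * (W * {aa n}) := by rw [mul_assoc]
        _ = {b ^ jj} * ({aa n} * (σ ((n:ℚ)*r) '' W)) := by rw [hconj n]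
        _ = {b ^ jj * aa n} * (σ ((n:ℚ)*r) '' W) := by
            rw [← mul_assoc, Set.singleton_mul_singleton]
  -- negative indices
  have hneg : ∀ n : ℕ, ∃ β : K, aprod W (A (-(n:ℚ) * r)) = W * {β} ∧
      W * {β} = {β} * (σ (-(n:ℚ) * r) '' W) := by
    intro n
    rcases Classical.em (b = 0) with hb | hb
    · exact huniv hb _
    have hcb : Aux9.CommW W b := Aux9.commW_b hTV hb hJb
    set vv : ℕ → K := fun m => σ (-(m:ℚ)*r) (aa m) with hvv
    have hvv0 : ∀ m, vv m ≠ 0 := fun m => hσne _ _ (haan0 m)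
    have hstar : ∀ m : ℕ, (σ (-(m:ℚ)*r) '' W) * {vv m} = {vv m} * W := by
      intro m
      have h0' := congrArg (fun S => σ (-(m:ℚ)*r) '' S) (hconj m)
      simp only [Set.image_mul, Set.image_singleton] at h0'
      rw [hcomp ((m:ℚ)*r) (-(m:ℚ)*r) W] at h0'
      have hq : (m:ℚ)*r + -(m:ℚ)*r = 0 := by ring
      rw [hq, himg0] at h0'
      exact h0'
    have hconjneg : ∀ m : ℕ, W * {(vv m)⁻¹} = {(vv m)⁻¹} * (σ (-(m:ℚ)*r) '' W) := by
      intro m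
      apply Set.eq_of_subset_of_subset
      · intro z hz
        obtain ⟨w, hw, rfl⟩ := Aux9.mem_mulsing.1 hz
        have hmem : vv m * w ∈ ({vv m} : Set K) * W := Aux9.mem_singmul.2 ⟨w, hw, rfl⟩
        rw [← hstar m] at hmem
        obtain ⟨y, hy, hyy⟩ := Aux9.mem_mulsing.1 hmem
        refine Aux9.mem_singmul.2 ⟨y, hy, ?_⟩
        have h1'' : (vv m)⁻¹ * (y * vv m) * (vv m)⁻¹ = (vv m)⁻¹ * (vv m * w) * (vv m)⁻¹ := by
          rw [hyy]
        simp only [mul_assoc, mul_inv_cancel₀ (hvv0 m), mul_one,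
          inv_mul_cancel_left₀ (hvv0 m)] at h1''
        exact h1''
      · intro z hz
        obtain ⟨y, hy, rfl⟩ := Aux9.mem_singmul.1 hz
        have hmem : y * vv m ∈ (σ (-(m:ℚ)*r) '' W) * {vv m} := Aux9.mem_mulsing.2 ⟨y, hy, rfl⟩
        rw [hstar m] at hmem
        obtain ⟨w, hw, hww⟩ := Aux9.mem_singmul.1 hmem
        refine Aux9.mem_mulsing.2 ⟨w, hw, ?_⟩
        have h1'' : (vv m)⁻¹ * (vv m * w) * (vv m)⁻¹ = (vv m)⁻¹ * (y * vv m) * (vv m)⁻¹ := by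
          rw [hww]
        simp only [mul_assoc, mul_inv_cancel₀ (hvv0 m), mul_one,
          inv_mul_cancel_left₀ (hvv0 m)] at h1''
        exact h1''
    have hEW : ∀ m : ℕ, ∀ z ∈ aprod W (A (-(m:ℚ)*r)), z * vv m ∈ W := by
      intro m
      apply Aux9.aprod_mul_mem (Aux9.isAddSubgrp_W hTV)
      intro x hx y hy
      rw [mul_assoc]
      apply hTV.mul_mem hx
      have hmem := hmul (-(m:ℚ)*r) (hzmn m) ((m:ℚ)*r) (hzn m) y hy (aa m) (haamem m)
      have hq : -(m:ℚ)*r + (m:ℚ)*r = 0 := by ring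
      rw [hq, h2] at hmem
      exact hVW hmem
    have hstep : ∀ m : ℕ, ∀ z ∈ aprod W (A (-(m:ℚ)*r)) * {vv m},
        z * b⁻¹ ∈ aprod W (A (-((m+1:ℕ):ℚ)*r)) * {vv (m+1)} := by
      intro m z hz
      obtain ⟨x, hx, rfl⟩ := Aux9.mem_mulsing.1 hz
      have hv0 : vv m ≠ 0 := hvv0 m
      set j : K := σ ((m:ℚ)*r) (vv m * b⁻¹ * (vv m)⁻¹) with hj
      have hjJ : j ∈ jacS W := by
        have hiff := Aux9.conjJ_iff hTV (inv_ne_zero hv0) (hconjneg m).symm j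
        apply hiff.2
        have hσj : σ (-(m:ℚ)*r) j = vv m * b⁻¹ * (vv m)⁻¹ := by
          rw [show -(m:ℚ)*r = -((m:ℚ)*r) from by ring]
          exact hσback ((m:ℚ)*r) _
        rw [hσj, inv_inv]
        have hcalc : (vv m)⁻¹ * (vv m * b⁻¹ * (vv m)⁻¹) * vv m = b⁻¹ := by
          simp only [mul_assoc, inv_mul_cancel_left₀ hv0]
          rw [inv_mul_cancel₀ hv0, mul_one]
        rw [hcalc]
        exact hbinvJ
      have hjc : j * σ (-r) a⁻¹ ∈ A (-r) := hAmr ▸ Aux9.mem_mulsing.2 ⟨j, hjJ, rfl⟩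
      have helem : x * σ (-(m:ℚ)*r) (j * σ (-r) a⁻¹) ∈ aprod W (A (-(m:ℚ)*r + -r)) :=
        hBA (-(m:ℚ)*r) (hzmn m) (-r) hzmr _ hjc x hx
      have hq : -(m:ℚ)*r + -r = -((m+1:ℕ):ℚ)*r := by push_cast; ring
      rw [hq] at helem
      refine Aux9.mem_mulsing.2 ⟨x * σ (-(m:ℚ)*r) (j * σ (-r) a⁻¹), helem, ?_⟩
      -- compute the element
      have hw0 : σ (-((m+1:ℕ):ℚ)*r) a ≠ 0 := hσne _ _ ha0
      have hσj2 : σ (-(m:ℚ)*r) j = vv m * b⁻¹ * (vv m)⁻¹ := by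
        rw [show -(m:ℚ)*r = -((m:ℚ)*r) from by ring]
        exact hσback ((m:ℚ)*r) _
      have hdecomp : σ (-(m:ℚ)*r) (j * σ (-r) a⁻¹)
          = vv m * b⁻¹ * (vv m)⁻¹ * (σ (-((m+1:ℕ):ℚ)*r) a)⁻¹ := by
        rw [map_mul, hσj2, hσfun (-r) (-(m:ℚ)*r) a⁻¹]
        have hq2 : -r + -(m:ℚ)*r = -((m+1:ℕ):ℚ)*r := by push_cast; ring
        rw [hq2, map_inv₀]
      have hvs : vv (m+1) = σ (-((m+1:ℕ):ℚ)*r) a * vv m := by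
        show σ (-((m+1:ℕ):ℚ)*r) (aa (m+1)) = _
        rw [haaS' m, map_mul, hσfun r (-((m+1:ℕ):ℚ)*r) (aa m)]
        have hq2 : r + -((m+1:ℕ):ℚ)*r = -(m:ℚ)*r := by push_cast; ring
        rw [hq2]
      rw [hdecomp, hvs]
      simp only [mul_assoc, inv_mul_cancel_left₀ hw0, inv_mul_cancel_left₀ hv0]
      rw [inv_mul_cancel₀ hv0, mul_one]
    have hElow : ∀ m : ℕ, ∀ w ∈ W, w * (b^m)⁻¹ ∈ aprod W (A (-(m:ℚ)*r)) * {vv m} := by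
      intro m
      induction m with
      | zero =>
          intro w hw
          have h00 : -((0:ℕ):ℚ) * r = 0 := by norm_num
          have hv1 : vv 0 = 1 := by show σ (-((0:ℕ):ℚ)*r) (aa 0) = 1; rw [haa0, map_one]
          refine Aux9.mem_mulsing.2 ⟨w, ?_, ?_⟩
          · rw [h00, hB0]; exact hw
          · rw [hv1, mul_one, pow_zero, inv_one, mul_one]
      | succ m ih =>
          intro w hw
          have heq : w * (b^(m+1:ℕ))⁻¹ = (w * (b^m)⁻¹) * b⁻¹ := by
            rw [pow_succ', mul_inv_rev, ← mul_assoc]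
          rw [heq]
          exact hstep m _ (ih w hw)
    -- classification
    set E : Set K := aprod W (A (-(n:ℚ)*r)) * {vv n} with hE'
    set F : Set K := E * {b^n} with hF
    have hFL : Aux9.LSub W F := (((hBL _).mul_sing _).mul_sing _)
    have hbn0 : (b:K)^n ≠ 0 := pow_ne_zero _ hb
    have hFW : W ⊆ F := by
      intro w hw
      refine Aux9.mem_mulsing.2 ⟨w * (b^n)⁻¹, hElow n w hw, ?_⟩
      rw [mul_assoc, inv_mul_cancel₀ hbn0, mul_one]
    have hFub : F ⊆ W * {b^n} := by
      intro z hz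
      obtain ⟨e, he, rfl⟩ := Aux9.mem_mulsing.1 hz
      obtain ⟨x, hx, rfl⟩ := Aux9.mem_mulsing.1 he
      exact Aux9.mem_mulsing.2 ⟨x * vv n, hEW n x hx, rfl⟩
    obtain ⟨jj, hjjn, hFeq⟩ := Aux9.lsub_classify hTV hb hJb n F hFL hFW hFub
    refine ⟨b^jj * (b^n)⁻¹ * (vv n)⁻¹, ?_, ?_⟩
    · apply Set.eq_of_subset_of_subset
      · intro x hx
        have h1' : (x * vv n) * b^n ∈ F :=
          Aux9.mem_mulsing.2 ⟨x * vv n, Aux9.mem_mulsing.2 ⟨x, hx, rfl⟩, rfl⟩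
        rw [hFeq] at h1'
        obtain ⟨w, hw, hww⟩ := Aux9.mem_mulsing.1 h1'
        refine Aux9.mem_mulsing.2 ⟨w, hw, ?_⟩
        have := congrArg (fun t => t * (b^n)⁻¹ * (vv n)⁻¹) hww
        simp only [mul_assoc, mul_inv_cancel₀ hbn0, mul_inv_cancel₀ (hvv0 n), mul_one] at this
        simp only [← mul_assoc] at this ⊢
        exact this
      · intro z hz
        obtain ⟨w, hw, rfl⟩ := Aux9.mem_mulsing.1 hz
        have h1' : w * b^jj ∈ F := hFeq ▸ Aux9.mem_mulsing.2 ⟨w, hw, rfl⟩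
        obtain ⟨e, he, hee⟩ := Aux9.mem_mulsing.1 h1'
        obtain ⟨x, hx, rfl⟩ := Aux9.mem_mulsing.1 he
        -- (x * vv n) * b^n = w * b^jj  ⇒ w * β = x
        have := congrArg (fun t => t * (b^n)⁻¹ * (vv n)⁻¹) hee
        simp only [mul_assoc, mul_inv_cancel₀ hbn0, mul_inv_cancel₀ (hvv0 n), mul_one] at this
        -- this : x = w * (b^jj * ((b^n)⁻¹ * (vv n)⁻¹))
        rw [show w * (b^jj * (b^n)⁻¹ * (vv n)⁻¹) = x from by
          rw [mul_assoc (b^jj), ← this]]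
        exact hx
    · have hγ : Aux9.CommW W (b^jj * (b^n)⁻¹) := (hcb.pow jj).mul ((hcb.pow n).inv)
      have hγ0 : b^jj * (b^n)⁻¹ ≠ 0 := mul_ne_zero (pow_ne_zero _ hb) (inv_ne_zero hbn0)
      calc W * {b^jj * (b^n)⁻¹ * (vv n)⁻¹}
          = (W * {b^jj * (b^n)⁻¹}) * {(vv n)⁻¹} := by
            rw [mul_assoc W, Set.singleton_mul_singleton]
        _ = ({b^jj * (b^n)⁻¹} * W) * {(vv n)⁻¹} := by rw [hγ.sing_comm hγ0]
        _ = {b^jj * (b^n)⁻¹} * (W * {(vv n)⁻¹}) := by rw [mul_assoc]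
        _ = {b^jj * (b^n)⁻¹} * ({(vv n)⁻¹} * (σ (-(n:ℚ)*r) '' W)) := by rw [hconjneg n]
        _ = {b^jj * (b^n)⁻¹ * (vv n)⁻¹} * (σ (-(n:ℚ)*r) '' W) := by
            rw [← mul_assoc, Set.singleton_mul_singleton]
  -- combine positive and negative
  have hkey : ∀ i : ℤ, ∃ β : K, aprod W (A ((i:ℚ) * r)) = W * {β} ∧
      W * {β} = {β} * (σ ((i:ℚ) * r) '' W) := by
    intro i
    obtain ⟨n, hn | hn⟩ := Int.eq_nat_or_neg i
    · have hc : ((i:ℚ)) = (n:ℚ) := by rw [hn]; push_cast; ring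
      rw [hc]
      exact hpos n
    · have hc : ((i:ℚ)) = -(n:ℚ) := by rw [hn]; push_cast; ring
      rw [hc]
      exact hneg n
  refine ⟨hkey, ⟨fun s _ => hBsub s, hB0, ?_, ?_⟩, ?_⟩
  · -- union condition
    intro s hs
    apply Set.eq_univ_of_univ_subset
    rw [← h3 s hs]
    apply Set.union_subset_union (hAB s)
    apply Set.image_mono
    rintro x ⟨c, hc, hc0, rfl⟩
    exact ⟨c, hAB _ hc, hc0, rfl⟩
  · -- product condition
    rintro s hs t ht
    obtain ⟨i, rfl⟩ := hs
    have hs' : ((i:ℚ))*r ∈ zmulSet r := ⟨i, rfl⟩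
    obtain ⟨β, hb1, hb2⟩ := hkey i
    have hABs : ∀ z ∈ aprod W (A ((i:ℚ)*r)), ∀ w ∈ W,
        z * σ ((i:ℚ)*r) w ∈ aprod W (A ((i:ℚ)*r)) := by
      intro z hz w hw
      rw [hb1] at hz ⊢
      obtain ⟨w', hw', rfl⟩ := Aux9.mem_mulsing.1 hz
      have hmem : β * σ ((i:ℚ)*r) w ∈ ({β} : Set K) * (σ ((i:ℚ)*r) '' W) :=
        Aux9.mem_singmul.2 ⟨σ ((i:ℚ)*r) w, ⟨w, hw, rfl⟩, rfl⟩
      rw [← hb2] at hmem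
      obtain ⟨w'', hw'', hww⟩ := Aux9.mem_mulsing.1 hmem
      refine Aux9.mem_mulsing.2 ⟨w' * w'', hTV.mul_mem hw' hw'', ?_⟩
      rw [mul_assoc, hww, ← mul_assoc]
    apply Aux9.aprod_subset (hBsub _)
    rintro x hx y ⟨z, hz, rfl⟩
    refine Aux9.aprod_twist_mem (hBsub _) (σ ((i:ℚ)*r)) x ?_ z hz
    intro w hw u hu
    rw [map_mul, ← mul_assoc]
    exact hBA _ hs' t ht u hu _ (hABs x hx w hw)
  · -- Type (e)
    have hBr : aprod W (A r) = A r := by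
      apply Set.eq_of_subset_of_subset
      · apply Aux9.aprod_subset hArSub
        intro x hx y hy
        exact (hWmem x).1 hx y hy
      · exact hAB r
    have hBmr : aprod W (A (-r)) = A (-r) := by
      apply Set.eq_of_subset_of_subset
      · apply Aux9.aprod_subset hAmrSub
        intro x hx y hy
        rw [hAmr] at hy ⊢
        obtain ⟨jv, hj, rfl⟩ := Aux9.mem_mulsing.1 hy
        exact Aux9.mem_mulsing.2 ⟨x * jv, hTV.jac_left hx hj, mul_assoc _ _ _⟩
      · exact hAB _
    refine ⟨a, b, ?_, ?_, ?_, ?_⟩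
    · show aprod W (A r) = Ol (aprod W (A r)) * {a}
      rw [hBr, ← hW]; exact hAr1
    · show aprod W (A r) = {a} * (σ r '' Ol (aprod W (A r)))
      rw [hBr, ← hW]; exact hAr2
    · show aprod W (A (-r)) = jacS (Ol (aprod W (A r))) * {σ (-r) a⁻¹}
      rw [hBmr, hBr, ← hW]; exact hAmr
    · show jacS (Ol (aprod W (A r))) = Ol (aprod W (A r)) * {b⁻¹}
      rw [hBr, ← hW]; exact hJb
end

section
/- Let (A_r)_{r∈ℚ} be a graded extension of V in K[ℚ,σ] of Type (e) with W = ∪_{s∈ℚ} O_l(A_s), O_l(A_t) = W for some t ∈ ℚ, and J(W) = Wb⁻¹ for some b ∈ K. Suppose f : ℚ → ℤ is a nonzero graded map and (α_r)_{r∈ℚ} are elements of K with α_0 = 1 such that WA_r = Wb^{f(r)}α_r, Wα_r = α_r W^{σ(r)} and Wα_r α_s^{σ(r)} = Wα_{r+s} for all r, s ∈ ℚ. Then for every r ∈ ℚ with r ≠ 0: Wb^{f(r)-1}α_r ⊊ A_r ⊊ Wb^{f(r)}α_r if and only if W ≠ V and f(r) + f(-r) = 0. -/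
open scoped Pointwise

variable {K : Type*} [DivisionRing K]

/-! ### Auxiliary machinery -/

section Aux

variable {W : Set K}

/-- Basic closure properties of a "total valuation ring"-like subset. -/
structure TVRSet (W : Set K) : Prop where
  zero_mem : (0 : K) ∈ W
  one_mem : (1 : K) ∈ W
  add_mem : ∀ x ∈ W, ∀ y ∈ W, x + y ∈ W
  neg_mem : ∀ x ∈ W, -x ∈ W
  mul_mem : ∀ x ∈ W, ∀ y ∈ W, x * y ∈ W
  total : ∀ k : K, k ≠ 0 → k ∈ W ∨ k⁻¹ ∈ W

lemma mem_mul_singleton {S : Set K} {a x : K} :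
    x ∈ S * ({a} : Set K) ↔ ∃ w ∈ S, w * a = x := by
  constructor
  · rintro ⟨w, hw, y, hy, rfl⟩
    rcases hy with rfl
    exact ⟨w, hw, rfl⟩
  · rintro ⟨w, hw, rfl⟩
    exact ⟨w, hw, a, rfl, rfl⟩

lemma conj_zpow₀ {a x : K} (ha : a ≠ 0) (hx : x ≠ 0) (k : ℤ) :
    (a * x * a⁻¹) ^ k = a * x ^ k * a⁻¹ := by
  have hcan : ∀ z : K, a⁻¹ * (a * z) = z := fun z => by
    rw [← mul_assoc, inv_mul_cancel₀ ha, one_mul]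
  have hne : a * x * a⁻¹ ≠ 0 := mul_ne_zero (mul_ne_zero ha hx) (inv_ne_zero ha)
  induction k using Int.induction_on with
  | zero => simp [mul_inv_cancel₀ ha]
  | succ n ih =>
      rw [zpow_add_one₀ hne, ih, zpow_add_one₀ hx]
      simp only [mul_assoc]
      rw [hcan]
  | pred n ih =>
      rw [zpow_sub_one₀ hne, ih, zpow_sub_one₀ hx, mul_inv_rev, mul_inv_rev, inv_inv]
      simp only [mul_assoc]
      rw [hcan]

lemma isAddSubgrp_neg {S : Set K} (h : IsAddSubgrp S) {x : K} (hx : x ∈ S) : -x ∈ S := by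
  have := h.2 0 h.1 x hx; simpa using this

lemma isAddSubgrp_add {S : Set K} (h : IsAddSubgrp S) {x y : K} (hx : x ∈ S) (hy : y ∈ S) :
    x + y ∈ S := by
  have := h.2 x hx (-y) (isAddSubgrp_neg h hy); simpa using this

/-- Pack an `IsAddSubgrp` set as an `AddSubgroup`. -/
def toAddSubgrp (S : Set K) (h : IsAddSubgrp S) : AddSubgroup K where
  carrier := S
  zero_mem' := h.1
  add_mem' := fun ha hb => isAddSubgrp_add h ha hb
  neg_mem' := fun ha => isAddSubgrp_neg h ha

lemma mem_aprod {S T : Set K} {x y : K} (hx : x ∈ S) (hy : y ∈ T) : x * y ∈ aprod S T :=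
  AddSubgroup.subset_closure (Set.mul_mem_mul hx hy)

lemma aprod_le {S T X : Set K} (hX : IsAddSubgrp X) (h : S * T ⊆ X) : aprod S T ⊆ X := by
  have : AddSubgroup.closure (S * T) ≤ toAddSubgrp X hX :=
    (AddSubgroup.closure_le _).2 h
  exact this

lemma jac_subset : jacS W ⊆ W := fun _ hx => hx.1

variable (hW : TVRSet W)
include hW

lemma mem_jac_of_notW {k : K} (hk : k ∉ W) : k⁻¹ ∈ jacS W := by
  have hk0 : k ≠ 0 := fun h => hk (h ▸ hW.zero_mem)
  rcases hW.total k hk0 with h | h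
  · exact absurd h hk
  · exact ⟨h, Or.inr (by simpa using hk)⟩

lemma inv_mem_of_not_jac {x : K} (hx : x ∈ W) (hj : x ∉ jacS W) : x ≠ 0 ∧ x⁻¹ ∈ W := by
  by_cases h0 : x = 0
  · exact absurd ⟨hx, Or.inl h0⟩ hj
  rcases hW.total _ (inv_ne_zero h0) with h | h
  · exact ⟨h0, h⟩
  · rw [inv_inv] at h
    by_cases hiw : x⁻¹ ∈ W
    · exact ⟨h0, hiw⟩
    · exact absurd ⟨hx, Or.inr hiw⟩ hj

lemma inv_notW_of_jac {x : K} (hx : x ∈ jacS W) (h0 : x ≠ 0) : x⁻¹ ∉ W := by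
  rcases hx.2 with h | h
  · exact absurd h h0
  · exact h

lemma jac_mul_left {x j : K} (hx : x ∈ W) (hj : j ∈ jacS W) : x * j ∈ jacS W := by
  refine ⟨hW.mul_mem _ hx _ hj.1, ?_⟩
  by_cases h0 : x * j = 0
  · exact Or.inl h0
  have hx0 : x ≠ 0 := fun h => h0 (by simp [h])
  have hj0 : j ≠ 0 := fun h => h0 (by simp [h])
  refine Or.inr fun hinv => ?_
  have : j⁻¹ ∈ W := by
    have : (x * j)⁻¹ * x = j⁻¹ := by
      rw [mul_inv_rev, mul_assoc, inv_mul_cancel₀ hx0, mul_one]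
    rw [← this]; exact hW.mul_mem _ hinv _ hx
  exact inv_notW_of_jac hW hj hj0 this

lemma jac_mul_right {x j : K} (hj : j ∈ jacS W) (hx : x ∈ W) : j * x ∈ jacS W := by
  refine ⟨hW.mul_mem _ hj.1 _ hx, ?_⟩
  by_cases h0 : j * x = 0
  · exact Or.inl h0
  have hx0 : x ≠ 0 := fun h => h0 (by simp [h])
  have hj0 : j ≠ 0 := fun h => h0 (by simp [h])
  refine Or.inr fun hinv => ?_
  have : j⁻¹ ∈ W := by
    have : x * (j * x)⁻¹ = j⁻¹ := by
      rw [mul_inv_rev, ← mul_assoc, mul_inv_cancel₀ hx0, one_mul]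
    rw [← this]; exact hW.mul_mem _ hx _ hinv
  exact inv_notW_of_jac hW hj hj0 this

lemma jac_isAddSubgrp : IsAddSubgrp (jacS W) := by
  constructor
  · exact ⟨hW.zero_mem, Or.inl rfl⟩
  · intro x hx y hy
    have hny : -y ∈ jacS W := by
      refine ⟨hW.neg_mem _ hy.1, ?_⟩
      rcases hy.2 with h | h
      · exact Or.inl (by simp [h])
      · refine Or.inr fun hc => ?_
        rw [inv_neg] at hc
        exact h (by simpa using hW.neg_mem _ hc)
    rw [sub_eq_add_neg]
    -- add closure of jac
    generalize hz : -y = z at hny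
    clear hy hz y
    by_cases hx0 : x = 0
    · simpa [hx0] using hny
    by_cases hz0 : z = 0
    · simpa [hz0] using hx
    refine ⟨hW.add_mem _ hx.1 _ hny.1, ?_⟩
    by_cases hs0 : x + z = 0
    · exact Or.inl hs0
    refine Or.inr fun hinv => ?_
    rcases hW.total (x⁻¹ * z) (by simp [hx0, hz0]) with h | h
    · have hxi : x⁻¹ ∈ W := by
        have key : (1 + x⁻¹ * z) * (x + z)⁻¹ = x⁻¹ := by
          have h1 : 1 + x⁻¹ * z = x⁻¹ * (x + z) := by
            rw [mul_add, inv_mul_cancel₀ hx0]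
          rw [h1, mul_assoc, mul_inv_cancel₀ hs0, mul_one]
        rw [← key]
        exact hW.mul_mem _ (hW.add_mem _ hW.one_mem _ h) _ hinv
      exact inv_notW_of_jac hW hx hx0 hxi
    · rw [mul_inv_rev, inv_inv] at h
      have hzi : z⁻¹ ∈ W := by
        have key : (1 + z⁻¹ * x) * (x + z)⁻¹ = z⁻¹ := by
          have h1 : 1 + z⁻¹ * x = z⁻¹ * (x + z) := by
            rw [mul_add, inv_mul_cancel₀ hz0, add_comm]
          rw [h1, mul_assoc, mul_inv_cancel₀ hs0, mul_one]
        rw [← key]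
        exact hW.mul_mem _ (hW.add_mem _ hW.one_mem _ h) _ hinv
      exact inv_notW_of_jac hW hny hz0 hzi

lemma one_not_jac : (1 : K) ∉ jacS W := by
  rintro ⟨-, h | h⟩
  · exact one_ne_zero h
  · rw [inv_one] at h; exact h hW.one_mem

variable {b : K} (hbne : b ≠ 0) (hb : jacS W = W * {b⁻¹})
include hbne hb

lemma binv_jac : b⁻¹ ∈ jacS W := by
  rw [hb]; exact mem_mul_singleton.2 ⟨1, hW.one_mem, one_mul _⟩

lemma b_notW : b ∉ W := by
  have := inv_notW_of_jac hW (binv_jac hW hbne hb) (inv_ne_zero hbne)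
  simpa using this

lemma conj_binv {x : K} (hx : x ∈ W) : b⁻¹ * x * b ∈ W := by
  have h1 : b⁻¹ * x ∈ jacS W := jac_mul_right hW (binv_jac hW hbne hb) hx
  rw [hb] at h1
  rcases mem_mul_singleton.1 h1 with ⟨w, hw, hwx⟩
  have : b⁻¹ * x * b = w := by
    rw [← hwx, mul_assoc, inv_mul_cancel₀ hbne, mul_one]
  rwa [this]

lemma conj_b {x : K} (hx : x ∈ W) : b * x * b⁻¹ ∈ W := by
  by_cases hx0 : x = 0
  · simpa [hx0] using hW.zero_mem
  by_contra hz
  have hz0 : b * x * b⁻¹ ≠ 0 := by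
    simp [hbne, hx0]
  have hzi : (b * x * b⁻¹)⁻¹ ∈ jacS W := mem_jac_of_notW hW hz
  have heq : (b * x * b⁻¹)⁻¹ = b * x⁻¹ * b⁻¹ := by
    rw [mul_inv_rev, mul_inv_rev, inv_inv]
    rw [mul_assoc]
  rw [heq, hb] at hzi
  rcases mem_mul_singleton.1 hzi with ⟨w, hw, hwx⟩
  have hxi : x⁻¹ = b⁻¹ * w := by
    have hw2 : w = b * x⁻¹ := by
      have := congrArg (fun y => y * b) hwx
      simpa [mul_assoc, inv_mul_cancel₀ hbne] using this
    rw [hw2, ← mul_assoc, inv_mul_cancel₀ hbne, one_mul]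
  have hxij : x⁻¹ ∈ jacS W := by
    rw [hxi]
    have : b⁻¹ * w = (b⁻¹ * w * b) * b⁻¹ := by
      rw [mul_assoc, mul_assoc, mul_inv_cancel₀ hbne, mul_one]
    rw [this, hb]
    exact mem_mul_singleton.2 ⟨_, conj_binv hW hbne hb hw, rfl⟩
  have : (x⁻¹)⁻¹ ∉ W := inv_notW_of_jac hW hxij (inv_ne_zero hx0)
  rw [inv_inv] at this
  exact this hx

lemma bconj_zpow (k : ℤ) {x : K} (hx : x ∈ W) : b ^ k * x * b ^ (-k) ∈ W := by
  induction k using Int.induction_on with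
  | zero => simpa using hx
  | succ n ih =>
      have heq : b ^ ((n : ℤ) + 1) * x * b ^ (-((n : ℤ) + 1)) =
          b * (b ^ (n : ℤ) * x * b ^ (-(n : ℤ))) * b⁻¹ := by
        rw [show ((n : ℤ) + 1) = 1 + (n : ℤ) by ring, zpow_add₀ hbne 1 (n : ℤ),
          show -(1 + (n : ℤ)) = -(n : ℤ) + -1 by ring, zpow_add₀ hbne (-(n : ℤ)) (-1)]
        simp only [zpow_one, zpow_neg_one, mul_assoc]
      rw [heq]
      exact conj_b hW hbne hb ih
  | pred n ih =>
      have heq : b ^ (-(n : ℤ) - 1) * x * b ^ (-(-(n : ℤ) - 1)) =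
          b⁻¹ * (b ^ (-(n : ℤ)) * x * b ^ (-(-(n : ℤ)))) * b := by
        rw [show (-(n : ℤ) - 1) = -1 + -(n : ℤ) by ring, zpow_add₀ hbne (-1) (-(n : ℤ)),
          show -(-1 + -(n : ℤ)) = -(-(n : ℤ)) + 1 by ring, zpow_add₀ hbne (-(-(n : ℤ))) 1]
        simp only [zpow_one, zpow_neg_one, mul_assoc]
      rw [heq]
      exact conj_binv hW hbne hb ih

lemma zpow_nonpos_mem {k : ℤ} (hk : k ≤ 0) : b ^ k ∈ W := by
  obtain ⟨n, rfl⟩ : ∃ n : ℕ, k = -(n : ℤ) := ⟨(-k).toNat, by omega⟩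
  have : b ^ (-(n : ℤ)) = (b⁻¹) ^ n := by
    rw [zpow_neg, zpow_natCast, ← inv_pow]
  rw [this]
  clear this hk
  induction n with
  | zero => simpa using hW.one_mem
  | succ m ih =>
      rw [pow_succ]
      exact hW.mul_mem _ ih _ ((binv_jac hW hbne hb).1)

lemma binv_mul_jac {x : K} (hx : x ∈ W) : b⁻¹ * x ∈ jacS W := by
  have heq : b⁻¹ * x = (b⁻¹ * x * b) * b⁻¹ := by
    rw [mul_assoc, mul_assoc, mul_inv_cancel₀ hbne, mul_one]
  rw [heq, hb]
  exact mem_mul_singleton.2 ⟨_, conj_binv hW hbne hb hx, rfl⟩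

/-- `(b*v)^k = b^k * v'` for a unit `v` of `W`. -/
lemma bu_zpow {v : K} (hv : v ∈ W) (hvi : v⁻¹ ∈ W) (hv0 : v ≠ 0) (k : ℤ) :
    ∃ v' : K, v' ∈ W ∧ v'⁻¹ ∈ W ∧ v' ≠ 0 ∧ (b * v) ^ k = b ^ k * v' := by
  have hbv : b * v ≠ 0 := mul_ne_zero hbne hv0
  induction k using Int.induction_on with
  | zero => exact ⟨1, hW.one_mem, by simpa using hW.one_mem, one_ne_zero, by simp⟩
  | succ n ih =>
      obtain ⟨v', hv'1, hv'2, hv'0, hv'e⟩ := ih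
      refine ⟨(b⁻¹ * v' * b) * v, ?_, ?_, ?_, ?_⟩
      · exact hW.mul_mem _ (conj_binv hW hbne hb hv'1) _ hv
      · have : ((b⁻¹ * v' * b) * v)⁻¹ = v⁻¹ * (b⁻¹ * v'⁻¹ * b) := by
          rw [mul_inv_rev, mul_inv_rev, mul_inv_rev, inv_inv]
          simp only [mul_assoc]
        rw [this]
        exact hW.mul_mem _ hvi _ (conj_binv hW hbne hb hv'2)
      · simp [hbne, hv'0, hv0]
      · rw [zpow_add_one₀ hbv, hv'e, zpow_add_one₀ hbne]
        have : (b ^ (n:ℤ) * b) * ((b⁻¹ * v' * b) * v) = b ^ (n:ℤ) * ((b * b⁻¹) * (v' * (b * v))) := by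
          simp only [mul_assoc]
        rw [this, mul_inv_cancel₀ hbne, one_mul, mul_assoc]
  | pred n ih =>
      obtain ⟨v', hv'1, hv'2, hv'0, hv'e⟩ := ih
      refine ⟨b * (v' * v⁻¹) * b⁻¹, ?_, ?_, ?_, ?_⟩
      · exact conj_b hW hbne hb (hW.mul_mem _ hv'1 _ hvi)
      · have : (b * (v' * v⁻¹) * b⁻¹)⁻¹ = b * (v * v'⁻¹) * b⁻¹ := by
          rw [mul_inv_rev, mul_inv_rev, mul_inv_rev, inv_inv, inv_inv]
          simp only [mul_assoc]
        rw [this]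
        exact conj_b hW hbne hb (hW.mul_mem _ hv _ hv'2)
      · simp [hbne, hv'0, hv0]
      · rw [zpow_sub_one₀ hbv, hv'e, zpow_sub_one₀ hbne]
        have : (b ^ (-(n:ℤ)) * b⁻¹) * (b * (v' * v⁻¹) * b⁻¹) = b ^ (-(n:ℤ)) * ((b⁻¹ * b) * (v' * (v⁻¹ * b⁻¹))) := by
          simp only [mul_assoc]
        rw [mul_inv_rev, this, inv_mul_cancel₀ hbne, one_mul, mul_assoc]

end Aux

set_option maxHeartbeats 2000000

/-- Under the data of Lemma 4.11: for `r ≠ 0`, `Wb^{f(r)-1}α_r ⊊ A_r ⊊ Wb^{f(r)}α_r` iff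
`W ≠ V` and `f(r) + f(-r) = 0`. -/
theorem stmt12 (V : Subring K) (hV : IsTVR V) (hVK : (V : Set K) ≠ Set.univ)
    (σ : ℚ → (K ≃+* K)) (hσ : ∀ r s : ℚ, σ (r + s) = (σ r).trans (σ s))
    (A : ℚ → Set K) (hA : IsGradedExtQ (V : Set K) σ A)
    (W : Set K) (hW : W = ⋃ s : ℚ, Ol (A s))
    (hII : ∃ r : ℚ, 0 < r ∧ ¬ HrTypeI σ A r)
    (t : ℚ) (ht : Ol (A t) = W)
    (b : K) (hb : jacS W = W * {b⁻¹})
    (f : ℚ → ℤ) (hf : IsGradedMap f) (hfne : ∃ s : ℚ, f s ≠ 0)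
    (α : ℚ → K) (hα0 : α 0 = 1)
    (h1 : ∀ r : ℚ, aprod W (A r) = W * {b ^ f r * α r})
    (h2 : ∀ r : ℚ, W * {α r} = {α r} * (σ r '' W))
    (h3 : ∀ r s : ℚ, W * {α r * σ r (α s)} = W * {α (r + s)}) :
    ∀ r : ℚ, r ≠ 0 →
      ((W * {b ^ (f r - 1) * α r} ⊂ A r ∧ A r ⊂ W * {b ^ f r * α r}) ↔
        ((V : Set K) ≠ W ∧ f r + f (-r) = 0)) := by
  clear hII ht hfne
  obtain ⟨hAsub', hA0, hAun', hAmul'⟩ := hA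
  have hAsub : ∀ s : ℚ, IsAddSubgrp (A s) := fun s => hAsub' s trivial
  have hAun : ∀ s : ℚ, A s ∪ (σ s '' invS (A (-s))) = Set.univ := fun s => hAun' s trivial
  have hAmul : ∀ r s : ℚ, aprod (A r) (σ r '' A s) ⊆ A (r + s) :=
    fun r s => hAmul' r trivial s trivial
  have hzeroA : ∀ s, (0 : K) ∈ A s := fun s => (hAsub s).1
  -- σ basics
  have hσ0 : ∀ x : K, σ 0 x = x := by
    intro x
    have h00 := hσ 0 0
    rw [add_zero] at h00
    have h := DFunLike.congr_fun h00 x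
    rw [RingEquiv.trans_apply] at h
    exact (σ 0).injective h.symm
  have hσinv : ∀ (s : ℚ) (x : K), σ (-s) (σ s x) = x := by
    intro s x
    have h0 := hσ s (-s)
    rw [add_neg_cancel] at h0
    have h := DFunLike.congr_fun h0 x
    rw [RingEquiv.trans_apply] at h
    rw [← h, hσ0]
  have hσinv' : ∀ (s : ℚ) (x : K), σ s (σ (-s) x) = x := by
    intro s x
    have h0 := hσ (-s) s
    rw [neg_add_cancel] at h0
    have h := DFunLike.congr_fun h0 x
    rw [RingEquiv.trans_apply] at h
    rw [← h, hσ0]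
  have hσne : ∀ (s : ℚ) (x : K), x ≠ 0 → σ s x ≠ 0 := by
    intro s x hx h
    exact hx ((σ s).injective (h.trans (map_zero (σ s)).symm))
  -- products and union, elementwise
  have hprod : ∀ (r s : ℚ) (x y : K), x ∈ A r → y ∈ A s → x * σ r y ∈ A (r + s) :=
    fun r s x y hx hy => hAmul r s (mem_aprod hx (Set.mem_image_of_mem _ hy))
  have hunion' : ∀ (s : ℚ) (x : K), x ∉ A s → ∃ c, c ∈ A (-s) ∧ c ≠ 0 ∧ x = σ s c⁻¹ := by
    intro s x hx
    have hx2 : x ∈ A s ∪ σ s '' invS (A (-s)) := by rw [hAun s]; trivial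
    rcases hx2 with h | h
    · exact absurd h hx
    · obtain ⟨y, hy, hxy⟩ := h
      obtain ⟨c, hc, hc0, rfl⟩ := hy
      exact ⟨c, hc, hc0, hxy.symm⟩
  -- Ol basics
  have hOl0 : ∀ s, (0 : K) ∈ Ol (A s) := by
    intro s x hx; rw [zero_mul]; exact hzeroA s
  have hOl1 : ∀ s, (1 : K) ∈ Ol (A s) := by
    intro s x hx; rwa [one_mul]
  have hOlmul : ∀ s, ∀ x ∈ Ol (A s), ∀ y ∈ Ol (A s), x * y ∈ Ol (A s) := by
    intro s x hx y hy a ha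
    rw [mul_assoc]; exact hx _ (hy _ ha)
  have hOladd : ∀ s, ∀ x ∈ Ol (A s), ∀ y ∈ Ol (A s), x + y ∈ Ol (A s) := by
    intro s x hx y hy a ha
    rw [add_mul]; exact isAddSubgrp_add (hAsub s) (hx _ ha) (hy _ ha)
  have hOlneg : ∀ s, ∀ x ∈ Ol (A s), -x ∈ Ol (A s) := by
    intro s x hx a ha
    rw [neg_mul]; exact isAddSubgrp_neg (hAsub s) (hx _ ha)
  have hVOl : ∀ s, (V : Set K) ⊆ Ol (A s) := by
    intro s v hv x hx
    have h := hprod 0 s v x (by rw [hA0]; exact hv) hx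
    rwa [hσ0, zero_add] at h
  have hS6 : ∀ (s : ℚ) (k : K), k ∉ Ol (A s) → k ≠ 0 → k⁻¹ ∈ (V : Set K) := by
    intro s k hk hk0
    simp only [Ol, Set.mem_setOf_eq, not_forall] at hk
    obtain ⟨x, hx, hkx⟩ := hk
    have hkx0 : k * x ≠ 0 := fun h => hkx (h ▸ hzeroA s)
    have hx0 : x ≠ 0 := fun h => hkx0 (by rw [h, mul_zero])
    obtain ⟨c, hc, hc0, hceq⟩ := hunion' s _ hkx
    have hkinv : k⁻¹ = x * σ s c := by
      have h5 : k = σ s c⁻¹ * x⁻¹ := by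
        rw [← hceq, mul_assoc, mul_inv_cancel₀ hx0, mul_one]
      rw [h5, mul_inv_rev, inv_inv, map_inv₀, inv_inv]
    have h2p := hprod s (-s) x c hx hc
    rw [add_neg_cancel, hA0] at h2p
    rw [hkinv]; exact h2p
  have hcomp : ∀ s s', Ol (A s) ⊆ Ol (A s') ∨ Ol (A s') ⊆ Ol (A s) := by
    intro s s'
    by_contra hcon
    push_neg at hcon
    obtain ⟨h1c, h2c⟩ := hcon
    obtain ⟨x, hxB, hxC⟩ := Set.not_subset.1 h1c
    obtain ⟨y, hyC, hyB⟩ := Set.not_subset.1 h2c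
    have hx0 : x ≠ 0 := fun h => hxC (h ▸ hOl0 s')
    have hy0 : y ≠ 0 := fun h => hyB (h ▸ hOl0 s)
    by_cases hw : y⁻¹ * x ∈ Ol (A s')
    · refine hxC ?_
      have := hOlmul s' y hyC _ hw
      rwa [← mul_assoc, mul_inv_cancel₀ hy0, one_mul] at this
    · have hxy : (y⁻¹ * x)⁻¹ ∈ (V : Set K) := hS6 s' _ hw (by simp [hx0, hy0])
      rw [mul_inv_rev, inv_inv] at hxy
      have h6 : x⁻¹ * y ∈ Ol (A s) := hVOl s hxy
      refine hyB ?_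
      have := hOlmul s x hxB _ h6
      rwa [← mul_assoc, mul_inv_cancel₀ hx0, one_mul] at this
  -- W facts
  have hWmem : ∀ k : K, k ∈ W ↔ ∃ s, k ∈ Ol (A s) := by
    intro k; rw [hW]; exact Set.mem_iUnion
  have hTV : TVRSet W := by
    constructor
    · exact (hWmem 0).2 ⟨0, hOl0 0⟩
    · exact (hWmem 1).2 ⟨0, hOl1 0⟩
    · intro x hx y hy
      obtain ⟨s, hs⟩ := (hWmem x).1 hx
      obtain ⟨s', hs'⟩ := (hWmem y).1 hy
      rcases hcomp s s' with h | h
      · exact (hWmem _).2 ⟨s', hOladd s' _ (h hs) _ hs'⟩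
      · exact (hWmem _).2 ⟨s, hOladd s _ hs _ (h hs')⟩
    · intro x hx
      obtain ⟨s, hs⟩ := (hWmem x).1 hx
      exact (hWmem _).2 ⟨s, hOlneg s _ hs⟩
    · intro x hx y hy
      obtain ⟨s, hs⟩ := (hWmem x).1 hx
      obtain ⟨s', hs'⟩ := (hWmem y).1 hy
      rcases hcomp s s' with h | h
      · exact (hWmem _).2 ⟨s', hOlmul s' _ (h hs) _ hs'⟩
      · exact (hWmem _).2 ⟨s, hOlmul s _ hs _ (h hs')⟩
    · intro k hk0
      by_cases hk : k ∈ W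
      · exact Or.inl hk
      · have : k ∉ Ol (A 0) := fun h => hk ((hWmem k).2 ⟨0, h⟩)
        exact Or.inr ((hWmem _).2 ⟨0, hVOl 0 (hS6 0 k this hk0)⟩)
  have hVW : (V : Set K) ⊆ W := fun v hv => (hWmem v).2 ⟨0, hVOl 0 hv⟩
  -- α facts
  have hαunit : ∀ s, α s * σ s (α (-s)) ∈ W ∧ (α s * σ s (α (-s)))⁻¹ ∈ W ∧ α s ≠ 0 := by
    intro s
    have h := h3 s (-s)
    rw [add_neg_cancel, hα0] at h
    have hWs : W * ({1} : Set K) = W := by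
      ext x; rw [mem_mul_singleton]
      constructor
      · rintro ⟨w, hw, rfl⟩; rwa [mul_one]
      · intro hx; exact ⟨x, hx, mul_one x⟩
    rw [hWs] at h
    have hu : α s * σ s (α (-s)) ∈ W := by
      rw [← h]; exact mem_mul_singleton.2 ⟨1, hTV.one_mem, one_mul _⟩
    have h1m : (1 : K) ∈ W * {α s * σ s (α (-s))} := h.symm ▸ hTV.one_mem
    obtain ⟨w, hw, hwu⟩ := mem_mul_singleton.1 h1m
    have hui : (α s * σ s (α (-s)))⁻¹ = w := inv_eq_of_mul_eq_one_left hwu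
    have hune : α s * σ s (α (-s)) ≠ 0 := by
      intro h0; rw [h0, mul_zero] at hwu; exact one_ne_zero hwu.symm
    exact ⟨hu, hui ▸ hw, fun h0 => hune (by rw [h0, zero_mul])⟩
  have hα_ne : ∀ s, α s ≠ 0 := fun s => (hαunit s).2.2
  -- conjugation by α
  have hconjα : ∀ (s : ℚ) (w : K), w ∈ W → α s * σ s w * (α s)⁻¹ ∈ W := by
    intro s w hw
    have hm : α s * σ s w ∈ ({α s} : Set K) * (σ s '' W) :=
      Set.mul_mem_mul rfl (Set.mem_image_of_mem _ hw)
    rw [← h2 s] at hm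
    obtain ⟨w', hw', he⟩ := mem_mul_singleton.1 hm
    have : α s * σ s w * (α s)⁻¹ = w' := by
      rw [← he, mul_assoc, mul_inv_cancel₀ (hα_ne s), mul_one]
    rwa [this]
  have hconjα' : ∀ (s : ℚ) (w : K), w ∈ W → σ (-s) ((α s)⁻¹ * w * α s) ∈ W := by
    intro s w hw
    have hm : w * α s ∈ W * ({α s} : Set K) := mem_mul_singleton.2 ⟨w, hw, rfl⟩
    rw [h2 s] at hm
    obtain ⟨a, ha, y, hy, he⟩ := Set.mem_mul.1 hm
    rw [Set.mem_singleton_iff] at ha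
    subst ha
    obtain ⟨w', hw', rfl⟩ := hy
    have h5 : (α s)⁻¹ * w * α s = σ s w' := by
      rw [mul_assoc, ← he, ← mul_assoc, inv_mul_cancel₀ (hα_ne s), one_mul]
    rw [h5, hσinv]
    exact hw'
  have hmoveJ : ∀ (s : ℚ) (j : K), j ∈ jacS W →
      ∃ j', j' ∈ jacS W ∧ j * α s = α s * σ s j' := by
    intro s j hj
    have hm : j * α s ∈ W * ({α s} : Set K) := mem_mul_singleton.2 ⟨j, jac_subset hj, rfl⟩
    rw [h2 s] at hm
    obtain ⟨a, ha, y, hy, he⟩ := Set.mem_mul.1 hm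
    rw [Set.mem_singleton_iff] at ha
    subst ha
    obtain ⟨j', hj'W, rfl⟩ := hy
    refine ⟨j', ⟨hj'W, ?_⟩, he.symm⟩
    by_cases hj'0 : j' = 0
    · exact Or.inl hj'0
    refine Or.inr fun hc => ?_
    have hj0 : j ≠ 0 := by
      intro h0
      rw [h0, zero_mul] at he
      exact (mul_ne_zero (hα_ne s) (hσne s _ hj'0)) he
    have hXW : α s * σ s j'⁻¹ * (α s)⁻¹ ∈ W := hconjα s _ hc
    have hXeq : α s * σ s j'⁻¹ * (α s)⁻¹ = j⁻¹ := by
      rw [map_inv₀]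
      have hje : j = α s * σ s j' * (α s)⁻¹ := by
        rw [he, mul_assoc, mul_inv_cancel₀ (hα_ne s), mul_one]
      rw [hje, mul_inv_rev, mul_inv_rev, inv_inv]
      simp only [mul_assoc]
    rw [hXeq] at hXW
    exact inv_notW_of_jac hTV hj hj0 hXW
  ----------------------------------------------------------------
  intro r hr
  by_cases hb0 : b = 0
  · -- degenerate case : W = K
    subst hb0
    have hjac0 : jacS W = {0} := by
      rw [hb, inv_zero]
      ext x
      rw [mem_mul_singleton]
      constructor
      · rintro ⟨w, hw, rfl⟩; simp
      · rintro rfl; exact ⟨0, hTV.zero_mem, by simp⟩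
    have hWuniv : W = Set.univ := by
      ext k
      simp only [Set.mem_univ, iff_true]
      by_contra hk
      have hki := mem_jac_of_notW hTV hk
      rw [hjac0, Set.mem_singleton_iff, inv_eq_zero] at hki
      exact hk (hki ▸ hTV.zero_mem)
    have huniv_mul : ∀ x : K, x ≠ 0 → (Set.univ : Set K) * {x} = Set.univ := by
      intro x hx
      ext y
      simp only [Set.mem_univ, iff_true, mem_mul_singleton]
      exact ⟨y * x⁻¹, trivial, by rw [mul_assoc, inv_mul_cancel₀ hx, mul_one]⟩
    have hmul0 : (Set.univ : Set K) * {(0 : K)} = {0} := by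
      ext y
      rw [mem_mul_singleton]
      constructor
      · rintro ⟨w, -, rfl⟩; simp
      · rintro rfl; exact ⟨0, trivial, by simp⟩
    have hZ0a : ∀ s, f s ≠ 0 → A s = {0} := by
      intro s hfs
      have hβ : (0 : K) ^ f s * α s = 0 := by rw [zero_zpow _ hfs, zero_mul]
      have h5 := h1 s
      rw [hβ, hWuniv, hmul0] at h5
      apply Set.Subset.antisymm
      · intro a ha
        have h6 : (1 : K) * a ∈ aprod W (A s) := mem_aprod hTV.one_mem ha
        rw [one_mul] at h6
        rw [hWuniv] at h6
        rw [h5] at h6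
        exact h6
      · intro a ha
        rw [Set.mem_singleton_iff] at ha
        exact ha ▸ hzeroA s
    have hZ0b : ∀ s, f s = 0 → A s ≠ {0} := by
      intro s hfs hAs
      have hβ : (0 : K) ^ f s * α s = α s := by rw [hfs, zpow_zero, one_mul]
      have h5 := h1 s
      rw [hβ, hWuniv, huniv_mul _ (hα_ne s)] at h5
      have hsub : aprod Set.univ (A s) ⊆ {0} := by
        apply aprod_le
        · exact ⟨rfl, by intro x hx y hy; simp_all⟩
        · rintro z hz
          obtain ⟨w, -, a, ha, rfl⟩ := Set.mem_mul.1 hz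
          rw [hAs] at ha
          rw [Set.mem_singleton_iff] at ha
          simp [ha]
      rw [h5] at hsub
      have h7 : α s ∈ ({0} : Set K) := hsub trivial
      exact hα_ne s (Set.mem_singleton_iff.1 h7)
    have hZ1 : ∀ s, A s = Set.univ ↔ A (-s) = {0} := by
      intro s
      constructor
      · intro hAs
        by_contra hne
        have hex : ∃ a' ∈ A (-s), a' ≠ 0 := by
          by_contra hno
          push_neg at hno
          apply hne
          apply Set.Subset.antisymm
          · intro x hx; rw [Set.mem_singleton_iff]; exact hno x hx
          · intro x hx; rw [Set.mem_singleton_iff] at hx; exact hx ▸ hzeroA (-s)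
        obtain ⟨a', ha', ha'0⟩ := hex
        apply hVK
        apply Set.Subset.antisymm (Set.subset_univ _)
        intro v _
        have hσa0 : σ s a' ≠ 0 := hσne s _ ha'0
        have hmem : v * (σ s a')⁻¹ ∈ A s := by rw [hAs]; trivial
        have h6 := hprod s (-s) _ a' hmem ha'
        rw [add_neg_cancel, hA0] at h6
        rwa [mul_assoc, inv_mul_cancel₀ hσa0, mul_one] at h6
      · intro hAs
        apply Set.Subset.antisymm (Set.subset_univ _)
        intro x _
        by_contra hx
        obtain ⟨c, hc, hc0, -⟩ := hunion' s x hx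
        rw [hAs, Set.mem_singleton_iff] at hc
        exact hc0 hc
    by_cases hm : f r = 0
    · -- f r = 0
      have h_up : W * {(0:K) ^ f r * α r} = Set.univ := by
        rw [hm, zpow_zero, one_mul, hWuniv, huniv_mul _ (hα_ne r)]
      have h_low : W * {(0:K) ^ (f r - 1) * α r} = {0} := by
        rw [hm, zero_zpow _ (by norm_num : (0:ℤ) - 1 ≠ 0), zero_mul, hWuniv, hmul0]
      rw [h_up, h_low]
      have hVne : (V : Set K) ≠ W := by rw [hWuniv]; exact hVK
      constructor
      · rintro ⟨-, hup⟩
        refine ⟨hVne, ?_⟩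
        rw [hm, zero_add]
        by_contra hn
        have h8 := hZ0a (-r) hn
        have hAr : A r = Set.univ := (hZ1 r).2 h8
        rw [hAr] at hup
        exact (lt_irrefl _ hup)
      · rintro ⟨-, hε⟩
        rw [hm, zero_add] at hε
        constructor
        · rw [Set.ssubset_iff_subset_ne]
          refine ⟨by intro x hx; rw [Set.mem_singleton_iff] at hx; exact hx ▸ hzeroA r, ?_⟩
          exact fun h => hZ0b r hm h.symm
        · rw [Set.ssubset_univ_iff]
          intro hAr
          exact hZ0b (-r) hε ((hZ1 r).1 hAr)
    · -- f r ≠ 0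
      have hAr : A r = {0} := hZ0a r hm
      have hfneg : f (-r) = 0 := by
        by_contra hn
        have h5 := hZ0a (-r) hn
        have h6 : A (-r) = Set.univ := by
          rw [hZ1 (-r), neg_neg]; exact hAr
        rw [h6] at h5
        have h7 : (1 : K) ∈ ({0} : Set K) := h5 ▸ trivial
        rw [Set.mem_singleton_iff] at h7
        exact one_ne_zero h7
      apply iff_of_false
      · rintro ⟨-, hup⟩
        have h_up : W * {(0:K) ^ f r * α r} = {0} := by
          rw [zero_zpow _ hm, zero_mul, hWuniv, hmul0]
        rw [h_up, hAr] at hup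
        exact lt_irrefl _ hup
      · rintro ⟨-, hε⟩
        rw [hfneg, add_zero] at hε
        exact hm hε
  · -- main case : b ≠ 0
    have hbne : b ≠ 0 := hb0
    have hzcan : ∀ (i j : ℤ) (X : K), b ^ i * (b ^ j * X) = b ^ (i + j) * X := by
      intro i j X; rw [← mul_assoc, ← zpow_add₀ hbne]
    have hbinv_z : (b⁻¹ : K) = b ^ (-1 : ℤ) := (zpow_neg_one b).symm
    -- conjugation by α preserves the radical
    have hconjJ : ∀ (s : ℚ) (j : K), j ∈ jacS W → α s * σ s j * (α s)⁻¹ ∈ jacS W := by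
      intro s j hj
      by_cases hj0 : j = 0
      · subst hj0; rw [map_zero, mul_zero, zero_mul]; exact ⟨hTV.zero_mem, Or.inl rfl⟩
      refine ⟨hconjα s j hj.1, Or.inr fun hc => ?_⟩
      have he : (α s * σ s j * (α s)⁻¹)⁻¹ = α s * σ s j⁻¹ * (α s)⁻¹ := by
        rw [map_inv₀, mul_inv_rev, mul_inv_rev, inv_inv]
        simp only [mul_assoc]
      rw [he] at hc
      have h6 := hconjα' s _ hc
      have he2 : (α s)⁻¹ * (α s * σ s j⁻¹ * (α s)⁻¹) * α s = σ s j⁻¹ := by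
        simp only [← mul_assoc]
        rw [inv_mul_cancel₀ (hα_ne s), one_mul, mul_assoc, inv_mul_cancel₀ (hα_ne s), mul_one]
      rw [he2, hσinv] at h6
      exact inv_notW_of_jac hTV hj hj0 h6
    -- γ_s = α_s σ_s(b) α_s⁻¹ = b * (unit of W)
    have hγ : ∀ s : ℚ, ∃ v : K, v ∈ W ∧ v⁻¹ ∈ W ∧ v ≠ 0 ∧ α s * σ s b * (α s)⁻¹ = b * v := by
      intro s
      have hbJ : b⁻¹ ∈ jacS W := binv_jac hTV hbne hb
      have hγne : α s * σ s b * (α s)⁻¹ ≠ 0 :=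
        mul_ne_zero (mul_ne_zero (hα_ne s) (hσne s b hbne)) (inv_ne_zero (hα_ne s))
      have hγinvJ : (α s * σ s b * (α s)⁻¹)⁻¹ ∈ jacS W := by
        have h5 : α s * σ s b⁻¹ * (α s)⁻¹ ∈ jacS W := hconjJ s b⁻¹ hbJ
        have he : (α s * σ s b * (α s)⁻¹)⁻¹ = α s * σ s b⁻¹ * (α s)⁻¹ := by
          rw [map_inv₀, mul_inv_rev, mul_inv_rev, inv_inv]
          simp only [mul_assoc]
        rw [he]; exact h5
      obtain ⟨j', hj'J, hej⟩ := hmoveJ s b⁻¹ hbJ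
      have hj'J' := hj'J; rw [hb] at hj'J'
      obtain ⟨w6, hw6, hw6e⟩ := mem_mul_singleton.1 hj'J'
      have hjb : j' * b = w6 := by
        rw [← hw6e, mul_assoc, inv_mul_cancel₀ hbne, mul_one]
      have hv_mem : b⁻¹ * (α s * σ s b * (α s)⁻¹) ∈ W := by
        have he2 : b⁻¹ * (α s * σ s b * (α s)⁻¹) = α s * σ s w6 * (α s)⁻¹ :=
          calc b⁻¹ * (α s * σ s b * (α s)⁻¹)
              = (b⁻¹ * α s) * (σ s b * (α s)⁻¹) := by simp only [mul_assoc]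
            _ = (α s * σ s j') * (σ s b * (α s)⁻¹) := by rw [hej]
            _ = α s * (σ s j' * σ s b) * (α s)⁻¹ := by simp only [mul_assoc]
            _ = α s * σ s (j' * b) * (α s)⁻¹ := by rw [map_mul]
            _ = α s * σ s w6 * (α s)⁻¹ := by rw [hjb]
        rw [he2]; exact hconjα s w6 hw6
      have hγiW := hγinvJ.1
      rw [hb] at hγinvJ
      obtain ⟨w5, hw5, hw5e⟩ := mem_mul_singleton.1 hγinvJ
      refine ⟨b⁻¹ * (α s * σ s b * (α s)⁻¹), hv_mem, ?_, ?_, ?_⟩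
      · have he3 : (b⁻¹ * (α s * σ s b * (α s)⁻¹))⁻¹ = w5 := by
          rw [mul_inv_rev, inv_inv, ← hw5e, mul_assoc, inv_mul_cancel₀ hbne, mul_one]
        rw [he3]; exact hw5
      · exact mul_ne_zero (inv_ne_zero hbne) hγne
      · rw [← mul_assoc, mul_inv_cancel₀ hbne, one_mul]
    -- α_s σ_s(b^k) = b^k * unit * α_s
    have hαb : ∀ (s : ℚ) (k : ℤ), ∃ v : K, v ∈ W ∧ v⁻¹ ∈ W ∧ v ≠ 0 ∧
        α s * σ s (b ^ k) = b ^ k * (v * α s) := by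
      intro s k
      obtain ⟨v0, hv0W, hv0i, hv00, hγe⟩ := hγ s
      obtain ⟨v', h1', h2', h3', h4'⟩ := bu_zpow hTV hbne hb hv0W hv0i hv00 k
      refine ⟨v', h1', h2', h3', ?_⟩
      have hc : α s * (σ s b) ^ k * (α s)⁻¹ = (b * v0) ^ k := by
        rw [← hγe, conj_zpow₀ (hα_ne s) (hσne s b hbne)]
      rw [map_zpow₀]
      have he : α s * (σ s b) ^ k = (α s * (σ s b) ^ k * (α s)⁻¹) * α s := by
        rw [mul_assoc, inv_mul_cancel₀ (hα_ne s), mul_one]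
      rw [he, hc, h4', mul_assoc]
    -- A_s ⊆ W β_s
    have hE1 : ∀ s, A s ⊆ W * {b ^ f s * α s} := by
      intro s a ha
      have h5 := mem_aprod (S := W) hTV.one_mem ha
      rw [one_mul] at h5
      rw [← h1 s]
      exact h5
    -- A_s is never inside (jacS W) β_s
    have hE2 : ∀ s, ¬ (A s ⊆ jacS W * {b ^ f s * α s}) := by
      intro s hsub
      have hβ : b ^ f s * α s ≠ 0 := mul_ne_zero (zpow_ne_zero _ hbne) (hα_ne s)
      have hJβ : IsAddSubgrp (jacS W * {b ^ f s * α s}) := by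
        constructor
        · exact mem_mul_singleton.2 ⟨0, (jac_isAddSubgrp hTV).1, zero_mul _⟩
        · intro x hx y hy
          obtain ⟨j1, hj1, rfl⟩ := mem_mul_singleton.1 hx
          obtain ⟨j2, hj2, rfl⟩ := mem_mul_singleton.1 hy
          exact mem_mul_singleton.2 ⟨j1 - j2, (jac_isAddSubgrp hTV).2 _ hj1 _ hj2,
            sub_mul _ _ _⟩
      have hWA : W * A s ⊆ jacS W * {b ^ f s * α s} := by
        rintro z hz
        obtain ⟨w, hw, a, ha, rfl⟩ := Set.mem_mul.1 hz
        obtain ⟨j, hj, rfl⟩ := mem_mul_singleton.1 (hsub ha)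
        exact mem_mul_singleton.2 ⟨w * j, jac_mul_left hTV hw hj, mul_assoc w j _⟩
      have h5 : W * {b ^ f s * α s} ⊆ jacS W * {b ^ f s * α s} := by
        rw [← h1 s]; exact aprod_le hJβ hWA
      have hβmem : b ^ f s * α s ∈ W * {b ^ f s * α s} :=
        mem_mul_singleton.2 ⟨1, hTV.one_mem, one_mul _⟩
      obtain ⟨j, hj, hje⟩ := mem_mul_singleton.1 (h5 hβmem)
      have hj1 : j = 1 := mul_right_cancel₀ hβ (hje.trans (one_mul _).symm)
      exact one_not_jac hTV (hj1 ▸ hj)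
    -- CORE computation
    have hcore : ∀ (s : ℚ) (w : K), w ∈ W → w * (b ^ f s * α s) ∉ A s →
        w ≠ 0 ∧ b ^ (-(f s + f (-s))) * w⁻¹ ∈ W := by
      intro s w hwW hnot
      have hw0 : w ≠ 0 := by
        rintro rfl
        rw [zero_mul] at hnot
        exact hnot (hzeroA s)
      obtain ⟨c, hcA, hc0, hceq⟩ := hunion' s _ hnot
      obtain ⟨w2, hw2W, hw2e⟩ := mem_mul_singleton.1 (hE1 (-s) hcA)
      have hmain : w * (b ^ f s * α s) * (σ s w2 * (σ s (b ^ f (-s)) * σ s (α (-s)))) = 1 := by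
        have h5 : w * (b ^ f s * α s) * σ s c = 1 := by
          rw [hceq, ← map_mul, inv_mul_cancel₀ hc0, map_one]
        rw [← hw2e, map_mul, map_mul] at h5
        exact h5
      have hw1W : α s * σ s w2 * (α s)⁻¹ ∈ W := hconjα s w2 hw2W
      have hw1e : ∀ X : K, α s * (σ s w2 * X) = (α s * σ s w2 * (α s)⁻¹) * (α s * X) := by
        intro X
        simp only [mul_assoc]
        rw [show (α s)⁻¹ * (α s * X) = X by rw [← mul_assoc, inv_mul_cancel₀ (hα_ne s), one_mul]]
      obtain ⟨v, hvW, hvi, hv0, hve⟩ := hαb s (f (-s))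
      have hve' : ∀ X : K, α s * (σ s (b ^ f (-s)) * X) = b ^ f (-s) * (v * (α s * X)) := by
        intro X
        rw [← mul_assoc, hve]
        simp only [mul_assoc]
      simp only [mul_assoc] at hmain
      rw [hw1e, hve'] at hmain
      have hinv : w⁻¹ = b ^ f s * ((α s * σ s w2 * (α s)⁻¹) *
          (b ^ f (-s) * (v * (α s * σ s (α (-s)))))) := by
        apply inv_eq_of_mul_eq_one_right
        exact hmain
      refine ⟨hw0, ?_⟩
      rw [hinv, hzcan, show -(f s + f (-s)) + f s = -f (-s) by ring]
      have hfin : b ^ (-f (-s)) * ((α s * σ s w2 * (α s)⁻¹) *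
          (b ^ f (-s) * (v * (α s * σ s (α (-s)))))) =
          (b ^ (-f (-s)) * (α s * σ s w2 * (α s)⁻¹) * b ^ f (-s)) *
            (v * (α s * σ s (α (-s)))) := by
        simp only [mul_assoc]
      rw [hfin]
      have hXW : b ^ (-f (-s)) * (α s * σ s w2 * (α s)⁻¹) * b ^ (- -f (-s)) ∈ W :=
        bconj_zpow hTV hbne hb _ hw1W
      rw [neg_neg] at hXW
      exact hTV.mul_mem _ hXW _ (hTV.mul_mem _ hvW _ (hαunit s).1)
    -- (jacS W) β_s ⊆ A_s
    have hM2 : ∀ (s : ℚ) (j : K), j ∈ jacS W → j * (b ^ f s * α s) ∈ A s := by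
      intro s j hj
      by_contra hnot
      obtain ⟨hj0, hcw⟩ := hcore s j (jac_subset hj) hnot
      have hle : f s + f (-s) ≤ 0 := by
        have h5 := hf.2.1 s (-s)
        rwa [add_neg_cancel, hf.1] at h5
      have hjiW : j⁻¹ ∈ W := by
        have h9 := hTV.mul_mem _ (zpow_nonpos_mem hTV hbne hb hle) _ hcw
        rwa [← mul_assoc, ← zpow_add₀ hbne, add_neg_cancel, zpow_zero, one_mul] at h9
      exact inv_notW_of_jac hTV hj hj0 hjiW
    -- if V = W then A_s = W β_s
    have hM6 : (V : Set K) = W → ∀ (s : ℚ) (w : K), w ∈ W → w * (b ^ f s * α s) ∈ A s := by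
      intro hVWeq s w hw
      have hsub : aprod W (A s) ⊆ A s := by
        apply aprod_le (hAsub s)
        rintro z hz
        obtain ⟨w', hw', a, ha, rfl⟩ := Set.mem_mul.1 hz
        have hw'' : w' ∈ A 0 := by rw [hA0, hVWeq]; exact hw'
        have h5 := hprod 0 s w' a hw'' ha
        rwa [hσ0, zero_add] at h5
      apply hsub
      rw [h1 s]
      exact mem_mul_singleton.2 ⟨w, hw, rfl⟩
    -- if ε = 0, V ≠ W then A_s ≠ W β_s
    have hM5 : ∀ s : ℚ, f s + f (-s) = 0 → (V : Set K) ≠ W →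
        W * {b ^ f s * α s} ⊆ A s → False := by
      intro s hε hVWne hup
      by_cases hC : ∃ a' ∈ A (-s), b ^ f s * α s * σ s a' ∉ jacS W
      · obtain ⟨a', ha', hcj⟩ := hC
        have hβA : b ^ f s * α s ∈ A s := hup (mem_mul_singleton.2 ⟨1, hTV.one_mem, one_mul _⟩)
        have hcV : b ^ f s * α s * σ s a' ∈ (V : Set K) := by
          have h5 := hprod s (-s) _ a' hβA ha'
          rwa [add_neg_cancel, hA0] at h5
        have hcW : b ^ f s * α s * σ s a' ∈ W := hVW hcV
        obtain ⟨hc0, hciW⟩ := inv_mem_of_not_jac hTV hcW hcj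
        apply hVWne
        apply Set.Subset.antisymm hVW
        intro w hw
        have h5 : (w * (b ^ f s * α s * σ s a')⁻¹) * (b ^ f s * α s) ∈ A s :=
          hup (mem_mul_singleton.2 ⟨_, hTV.mul_mem _ hw _ hciW, rfl⟩)
        have h6 := hprod s (-s) _ a' h5 ha'
        rw [add_neg_cancel, hA0] at h6
        have h7 : w * (b ^ f s * α s * σ s a')⁻¹ * (b ^ f s * α s) * σ s a' = w := by
          rw [mul_assoc (w * (b ^ f s * α s * σ s a')⁻¹), mul_assoc w,
            inv_mul_cancel₀ hc0, mul_one]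
        rwa [h7] at h6
      · push_neg at hC
        apply hE2 (-s)
        intro a' ha'
        have hjJ : b ^ f s * α s * σ s a' ∈ jacS W := hC a' ha'
        have hjJ' := hjJ
        rw [hb] at hjJ'
        obtain ⟨w9, hw9, hw9e⟩ := mem_mul_singleton.1 hjJ'
        have hw10 : b ^ (-f s) * w9 * b ^ (- -f s) ∈ W := bconj_zpow hTV hbne hb _ hw9
        rw [neg_neg] at hw10
        obtain ⟨w10, hw10W, hw10e⟩ : ∃ w10, w10 ∈ W ∧ b ^ (-f s) * w9 * b ^ f s = w10 :=
          ⟨_, hw10, rfl⟩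
        have hσa : σ s a' = (α s)⁻¹ * (w10 * b ^ (-f s - 1)) := by
          have hA5 : b ^ (-f s) * (b ^ f s * α s * σ s a') = α s * σ s a' := by
            simp only [← mul_assoc]
            rw [← zpow_add₀ hbne]
            norm_num
          have h8 : σ s a' = (α s)⁻¹ * (b ^ (-f s) * (b ^ f s * α s * σ s a')) := by
            rw [hA5, ← mul_assoc, inv_mul_cancel₀ (hα_ne s), one_mul]
          rw [h8]
          congr 1
          rw [← hw10e, ← hw9e]
          have h9 : b ^ f s * b ^ (-f s - 1) = b⁻¹ := by
            rw [← zpow_add₀ hbne, show f s + (-f s - 1) = -1 by ring, zpow_neg_one]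
          simp only [mul_assoc]
          rw [h9]
        obtain ⟨v', hv'W, hv'i, hv'0, hv'e⟩ := hαb (-s) (-f s - 1)
        have hu'0 := hαunit (-s)
        simp only [neg_neg] at hu'0
        have hw11W : α (-s) * σ (-s) w10 * (α (-s))⁻¹ ∈ W :=
          hconjα (-s) _ hw10W
        have ha'eq : a' = (α (-s) * σ (-s) (α s))⁻¹ *
            ((α (-s) * σ (-s) w10 * (α (-s))⁻¹) *
              (b ^ (-f s - 1) * (v' * α (-s)))) := by
          have h10 : a' = σ (-s) (σ s a') := (hσinv s a').symm
          rw [h10, hσa, map_mul, map_mul, map_inv₀]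
          have h11 : (σ (-s) (α s))⁻¹ = (α (-s) * σ (-s) (α s))⁻¹ * α (-s) := by
            rw [mul_inv_rev, mul_assoc, inv_mul_cancel₀ (hα_ne (-s)), mul_one]
          rw [h11]
          have h12 : ∀ X : K, α (-s) * (σ (-s) w10 * X) =
              (α (-s) * σ (-s) w10 * (α (-s))⁻¹) * (α (-s) * X) := by
            intro X
            simp only [mul_assoc]
            rw [show (α (-s))⁻¹ * (α (-s) * X) = X by
              rw [← mul_assoc, inv_mul_cancel₀ (hα_ne (-s)), one_mul]]
          simp only [mul_assoc]
          rw [h12, hv'e]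
          simp only [mul_assoc]
        rw [ha'eq]
        have hn : f (-s) = -f s := by omega
        have hin : b ^ (-f s) * v' * b ^ (- -f s) ∈ W := bconj_zpow hTV hbne hb _ hv'W
        rw [neg_neg] at hin
        refine mem_mul_singleton.2 ⟨(α (-s) * σ (-s) (α s))⁻¹ *
            ((α (-s) * σ (-s) w10 * (α (-s))⁻¹) *
              (b⁻¹ * (b ^ (-f s) * v' * b ^ f s))), ?_, ?_⟩
        · apply jac_mul_left hTV hu'0.2.1
          apply jac_mul_left hTV hw11W
          exact binv_mul_jac hTV hbne hb hin
        · rw [hn]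
          simp only [mul_assoc]
          rw [hzcan (f s) (-f s), add_neg_cancel, zpow_zero, one_mul, hbinv_z, hzcan,
            show (-1 : ℤ) + -f s = -f s - 1 by ring]
    -- lower set identity
    have hlow_eq : W * {b ^ (f r - 1) * α r} = jacS W * {b ^ f r * α r} := by
      have hkey : ∀ w : K, w * (b ^ (f r - 1) * α r) = (w * b⁻¹) * (b ^ f r * α r) := by
        intro w
        simp only [mul_assoc]
        rw [hbinv_z, hzcan, show (-1 : ℤ) + f r = f r - 1 by ring]
      ext x
      rw [mem_mul_singleton, mem_mul_singleton]
      constructor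
      · rintro ⟨w, hw, rfl⟩
        refine ⟨w * b⁻¹, ?_, (hkey w).symm⟩
        rw [hb]; exact mem_mul_singleton.2 ⟨w, hw, rfl⟩
      · rintro ⟨j, hj, rfl⟩
        have hj' := hj
        rw [hb] at hj'
        obtain ⟨w, hw, rfl⟩ := mem_mul_singleton.1 hj'
        exact ⟨w, hw, hkey w⟩
    -- final assembly
    constructor
    · rintro ⟨hlow, hup⟩
      obtain ⟨x, hxW, hxA⟩ := Set.exists_of_ssubset hup
      obtain ⟨w, hwW, rfl⟩ := mem_mul_singleton.1 hxW
      obtain ⟨hw0, hcw⟩ := hcore r w hwW hxA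
      have hle : f r + f (-r) ≤ 0 := by
        have h5 := hf.2.1 r (-r)
        rwa [add_neg_cancel, hf.1] at h5
      have hge : -1 ≤ f r + f (-r) := hf.2.2 r
      constructor
      · intro hVWeq
        exact hxA (hM6 hVWeq r w hwW)
      · by_contra hne
        have hεm1 : f r + f (-r) = -1 := by omega
        rw [hεm1, show -(-1 : ℤ) = 1 by norm_num, zpow_one] at hcw
        have hwiJ : w⁻¹ ∈ jacS W := by
          have h9 := binv_mul_jac hTV hbne hb hcw
          rwa [← mul_assoc, inv_mul_cancel₀ hbne, one_mul] at h9
        have h10 := inv_notW_of_jac hTV hwiJ (inv_ne_zero hw0)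
        rw [inv_inv] at h10
        exact h10 hwW
    · rintro ⟨hVWne, hε⟩
      constructor
      · rw [hlow_eq, Set.ssubset_iff_subset_ne]
        constructor
        · rintro x hx
          obtain ⟨j, hj, rfl⟩ := mem_mul_singleton.1 hx
          exact hM2 r j hj
        · intro heq
          exact hE2 r (heq ▸ Set.Subset.refl _)
      · rw [Set.ssubset_def]
        exact ⟨hE1 r, fun hsup => hM5 r hε hVWne hsup⟩
end

section
/- Let f : ℚ → ℤ be a nonzero graded map and suppose f(r) + f(-r) = 0 for some rational r > 0. Then there is a smallest positive rational k with f(k) + f(-k) = 0, and for every s ∈ ℚ, f(s) + f(-s) = 0 if and only if s ∈ kℤ = {ik : i ∈ ℤ}. -/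
open scoped Pointwise

variable {K : Type*} [DivisionRing K]

section GmHelpers

variable {f : ℚ → ℤ}

lemma gm_nonpos (hf : IsGradedMap f) (s : ℚ) : f s + f (-s) ≤ 0 := by
  have h := hf.2.1 s (-s)
  rw [add_neg_cancel, hf.1] at h
  exact h

lemma gm_add (hf : IsGradedMap f) {a b : ℚ} (ha : f a + f (-a) = 0)
    (hb : f b + f (-b) = 0) :
    f (a + b) + f (-(a + b)) = 0 ∧ f (a + b) = f a + f b := by
  have h1 := hf.2.1 a b
  have h2 := hf.2.1 (-a) (-b)
  rw [show -a + -b = -(a + b) by ring] at h2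
  have h3 := gm_nonpos hf (a + b)
  omega

lemma gm_nsmul (hf : IsGradedMap f) {a : ℚ} (ha : f a + f (-a) = 0) (n : ℕ) :
    f ((n : ℚ) * a) + f (-((n : ℚ) * a)) = 0 ∧ f ((n : ℚ) * a) = n * f a := by
  induction n with
  | zero => simp [hf.1]
  | succ n ih =>
    have h := gm_add hf ih.1 ha
    rw [show (n : ℚ) * a + a = ((n + 1 : ℕ) : ℚ) * a by push_cast; ring] at h
    refine ⟨h.1, ?_⟩
    rw [h.2, ih.2]
    push_cast
    ring

lemma gm_zsmul (hf : IsGradedMap f) {a : ℚ} (ha : f a + f (-a) = 0) (i : ℤ) :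
    f ((i : ℚ) * a) + f (-((i : ℚ) * a)) = 0 ∧ f ((i : ℚ) * a) = i * f a := by
  obtain ⟨n, rfl | rfl⟩ := i.eq_nat_or_neg
  · have := gm_nsmul hf ha n
    push_cast
    push_cast at this
    exact this
  · have h := gm_nsmul hf ha n
    have he : ((-(n : ℤ) : ℤ) : ℚ) * a = -((n : ℚ) * a) := by push_cast; ring
    rw [he]
    constructor
    · rw [neg_neg]; omega
    · have hv : f (-((n : ℚ) * a)) = -((n : ℤ) * f a) := by omega
      rw [hv]; ring

lemma gm_inv (hf : IsGradedMap f) {g : ℚ} (hg : f g = 0) (hg' : f (-g) = 0)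
    (x : ℚ) : f (x + g) = f x := by
  have h1 := hf.2.1 x g
  have h2 := hf.2.1 (x + g) (-g)
  rw [show x + g + -g = x by ring] at h2
  omega

lemma gm_grow (hf : IsGradedMap f) {s : ℚ} (hs : 0 ≤ f s) :
    ∀ n : ℕ, 1 ≤ n → f s ≤ f ((n : ℚ) * s) := by
  intro n
  induction n with
  | zero => omega
  | succ n ih =>
    intro _
    rcases Nat.eq_zero_or_pos n with h | h
    · subst h; simp
    · have h1 := hf.2.1 ((n : ℚ) * s) s
      rw [show (n : ℚ) * s + s = ((n + 1 : ℕ) : ℚ) * s by push_cast; ring] at h1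
      have := ih h
      omega

lemma rat_mul_den {s r : ℚ} (hr : r ≠ 0) :
    (((s / r).den : ℚ)) * s = (((s / r).num : ℚ)) * r := by
  set t := s / r with ht
  have hq0 : (t.den : ℚ) ≠ 0 := Nat.cast_ne_zero.2 t.den_nz
  have hnum : (t.num : ℚ) = t * t.den := by
    have h := Rat.num_div_den t
    rwa [div_eq_iff hq0] at h
  have hgt : s = t * r := (div_mul_cancel₀ s hr).symm
  rw [hgt, hnum]
  ring

lemma gm_caseB (hf : IsGradedMap f) (hall : ∀ g : ℚ, f g + f (-g) = 0 → f g = 0)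
    {r : ℚ} (hr : r ≠ 0) (h0 : f r + f (-r) = 0)
    {s : ℚ} (hs0 : 0 ≤ f s) (hs1 : f s + f (-s) = -1) : False := by
  set n := (s / r).den with hn
  have hn1 : 1 ≤ n := (s / r).pos
  have hns : (n : ℚ) * s = (((s / r).num : ℚ)) * r := rat_mul_den hr
  have hPns : f ((n : ℚ) * s) + f (-((n : ℚ) * s)) = 0 := by
    rw [hns]; exact (gm_zsmul hf h0 _).1
  have hfns := hall _ hPns
  have hfns' : f (-((n : ℚ) * s)) = 0 := by omega
  have hn2 : 2 ≤ n := by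
    by_contra h
    have h1 : n = 1 := by omega
    rw [h1] at hPns
    norm_num at hPns
    omega
  have hgrow := gm_grow hf hs0 (n - 1) (by omega)
  have heq : ((n - 1 : ℕ) : ℚ) * s = -s + (n : ℚ) * s := by
    rw [Nat.cast_sub hn1]; push_cast; ring
  rw [heq, gm_inv hf hfns hfns' (-s)] at hgrow
  omega

lemma gm_memc (hf : IsGradedMap f) {g₀ : ℚ} (hP0 : f g₀ + f (-g₀) = 0) (hf0 : f g₀ ≠ 0)
    {g : ℚ} (hPg : f g + f (-g) = 0) :
    ∃ m : ℤ, g = (m : ℚ) * (g₀ / ((f g₀).natAbs.factorial : ℚ)) := by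
  have hg₀ : g₀ ≠ 0 := by rintro rfl; rw [hf.1] at hf0; exact hf0 rfl
  set t := g / g₀ with htdef
  set p := t.num with hp
  set q := t.den with hqd
  have hq0 : (q : ℚ) ≠ 0 := Nat.cast_ne_zero.2 t.den_nz
  have hqt : (p : ℚ) = t * q := by
    have h := Rat.num_div_den t
    rwa [div_eq_iff hq0] at h
  have hgt : g = t * g₀ := (div_mul_cancel₀ g hg₀).symm
  set A := Int.gcdA p q with hA
  set B := Int.gcdB p q with hB
  have hbez : (1 : ℤ) = p * A + (q : ℤ) * B := by
    have h := Int.gcd_eq_gcd_ab p (q : ℤ)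
    have hcop : Int.gcd p (q : ℤ) = 1 := by
      show p.natAbs.gcd (q : ℤ).natAbs = 1
      rw [Int.natAbs_natCast]
      exact t.reduced
    rw [hcop] at h
    exact_mod_cast h
  have hbezq : (1 : ℚ) = (p : ℚ) * A + (q : ℚ) * B := by exact_mod_cast hbez
  have hd : (A : ℚ) * g + (B : ℚ) * g₀ = g₀ / q := by
    rw [eq_div_iff hq0, hgt]
    linear_combination (-g₀) * hbezq - ((A : ℚ) * g₀) * hqt
  have hPd : f (g₀ / q) + f (-(g₀ / q)) = 0 := by
    rw [← hd]
    exact (gm_add hf (gm_zsmul hf hPg A).1 (gm_zsmul hf hP0 B).1).1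
  have hfq : f g₀ = (q : ℤ) * f (g₀ / q) := by
    have h := (gm_zsmul hf hPd (q : ℤ)).2
    rw [show ((q : ℤ) : ℚ) * (g₀ / q) = g₀ by push_cast; field_simp] at h
    exact h.symm ▸ rfl
  have hfd0 : f (g₀ / q) ≠ 0 := fun h => hf0 (by rw [hfq, h, mul_zero])
  have hqle : q ≤ (f g₀).natAbs := by
    have h1 : (f g₀).natAbs = q * (f (g₀ / q)).natAbs := by
      rw [hfq, Int.natAbs_mul, Int.natAbs_natCast]
    have h2 : 1 ≤ (f (g₀ / q)).natAbs := Int.natAbs_pos.2 hfd0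
    calc q = q * 1 := (mul_one q).symm
    _ ≤ q * (f (g₀ / q)).natAbs := Nat.mul_le_mul_left q h2
    _ = (f g₀).natAbs := h1.symm
  have hdvd : q ∣ (f g₀).natAbs.factorial := Nat.dvd_factorial t.pos hqle
  set N := (f g₀).natAbs.factorial with hNdef
  refine ⟨p * ((N / q : ℕ) : ℤ), ?_⟩
  have hNq : ((N / q : ℕ) : ℚ) * q = N := by exact_mod_cast congrArg Nat.cast (Nat.div_mul_cancel hdvd)
  have hN0 : (N : ℚ) ≠ 0 := Nat.cast_ne_zero.2 (Nat.factorial_ne_zero _)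
  have hcast : ((p * ((N / q : ℕ) : ℤ) : ℤ) : ℚ) = (p : ℚ) * ((N / q : ℕ) : ℚ) := by
    rw [Int.cast_mul, Int.cast_natCast]
  rw [hgt, hcast, show (p : ℚ) * ((N / q : ℕ) : ℚ) * (g₀ / (N : ℚ)) = ((p : ℚ) * ((N / q : ℕ) : ℚ) * g₀) / (N : ℚ) from (mul_div_assoc _ _ _).symm, eq_div_iff hN0]
  linear_combination (-(g₀ * t)) * hNq - (g₀ * ((N / q : ℕ) : ℚ)) * hqt

end GmHelpers

/-- If `f` is a nonzero graded map with `f(r) + f(-r) = 0` for some rational `r > 0`, then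
there is a smallest positive rational `k` with `f(k) + f(-k) = 0`, and `f(s) + f(-s) = 0`
iff `s ∈ kℤ`. -/
theorem stmt14 (f : ℚ → ℤ) (hf : IsGradedMap f) (hne : ∃ s : ℚ, f s ≠ 0)
    (r : ℚ) (hr : 0 < r) (h0 : f r + f (-r) = 0) :
    ∃ k : ℚ, 0 < k ∧ f k + f (-k) = 0 ∧
      (∀ k' : ℚ, 0 < k' → f k' + f (-k') = 0 → k ≤ k') ∧
      (∀ s : ℚ, f s + f (-s) = 0 ↔ ∃ i : ℤ, s = (i : ℚ) * k) := by
  by_cases hall : ∀ g : ℚ, f g + f (-g) = 0 → f g = 0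
  · exfalso
    obtain ⟨s, hs⟩ := hne
    have hnp := gm_nonpos hf s
    have hlb := hf.2.2 s
    have hsP : f s + f (-s) = -1 := by
      rcases eq_or_ne (f s + f (-s)) 0 with h | h
      · exact absurd (hall s h) hs
      · omega
    rcases le_or_gt 0 (f s) with h | h
    · exact gm_caseB hf hall (ne_of_gt hr) h0 h hsP
    · have h1 : 0 ≤ f (-s) := by omega
      have h2 : f (-s) + f (-(-s)) = -1 := by rw [neg_neg]; omega
      exact gm_caseB hf hall (ne_of_gt hr) h0 h1 h2
  · push_neg at hall
    obtain ⟨g, hPg, hfg⟩ := hall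
    obtain ⟨g₀, hg₀pos, hPg₀, hfg₀⟩ : ∃ g₀ : ℚ, 0 < g₀ ∧ f g₀ + f (-g₀) = 0 ∧ f g₀ ≠ 0 := by
      have hgne : g ≠ 0 := by rintro rfl; rw [hf.1] at hfg; exact hfg rfl
      rcases lt_or_gt_of_ne hgne with h | h
      · exact ⟨-g, by linarith, by rw [neg_neg]; omega, by omega⟩
      · exact ⟨g, h, hPg, hfg⟩
    set N := (f g₀).natAbs.factorial with hN
    set c := g₀ / (N : ℚ) with hc
    have hN0 : (0:ℚ) < (N : ℚ) := by exact_mod_cast Nat.factorial_pos (f g₀).natAbs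
    have hcpos : 0 < c := div_pos hg₀pos hN0
    have hTne : ∃ m : ℕ, 0 < m ∧ f ((m : ℚ) * c) + f (-((m : ℚ) * c)) = 0 := by
      refine ⟨N, Nat.factorial_pos _, ?_⟩
      rw [show (N : ℚ) * c = g₀ by rw [hc, mul_comm, div_mul_cancel₀ _ hN0.ne']]
      exact hPg₀
    classical
    set m₀ := Nat.find hTne with hm₀
    obtain ⟨hm₀pos, hPk⟩ := Nat.find_spec hTne
    set k := (m₀ : ℚ) * c with hk
    have hkpos : 0 < k := mul_pos (by exact_mod_cast hm₀pos) hcpos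
    have hmem : ∀ s : ℚ, f s + f (-s) = 0 → ∃ m : ℤ, s = (m : ℚ) * c :=
      fun s hs => gm_memc hf hPg₀ hfg₀ hs
    refine ⟨k, hkpos, hPk, ?_, ?_⟩
    · intro k' hk' hPk'
      obtain ⟨m, hm⟩ := hmem k' hPk'
      have hmpos : 0 < m := by
        by_contra h
        push_neg at h
        have hh : (m : ℚ) ≤ 0 := by exact_mod_cast h
        nlinarith
      have hfind : m₀ ≤ m.toNat := by
        apply Nat.find_min' hTne
        refine ⟨by omega, ?_⟩
        rw [show ((m.toNat : ℕ) : ℚ) = (m : ℚ) by exact_mod_cast Int.toNat_of_nonneg hmpos.le,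
          ← hm]
        exact hPk'
      have hle : (m₀ : ℚ) ≤ (m : ℚ) := by
        have : (m₀ : ℤ) ≤ m := by omega
        exact_mod_cast this
      rw [hm, hk]
      exact mul_le_mul_of_nonneg_right hle hcpos.le
    · intro s
      constructor
      · intro hPs
        obtain ⟨m, hm⟩ := hmem s hPs
        have hm₀z : (0 : ℤ) < (m₀ : ℤ) := by exact_mod_cast hm₀pos
        set a := m / (m₀ : ℤ) with ha
        set b := m % (m₀ : ℤ) with hb
        have hdm : (m₀ : ℤ) * a + b = m := Int.mul_ediv_add_emod m m₀
        have hb0 : 0 ≤ b := Int.emod_nonneg m (by omega)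
        have hblt : b < (m₀ : ℤ) := Int.emod_lt_of_pos m hm₀z
        have h1 := (gm_zsmul hf hPk a).1
        have h2 := gm_add hf hPs
          (show f (-((a : ℚ) * k)) + f (-(-((a : ℚ) * k))) = 0 by rw [neg_neg]; omega)
        have hPb : f ((b : ℚ) * c) + f (-((b : ℚ) * c)) = 0 := by
          have hqc : ((m₀ : ℤ) : ℚ) * (a : ℚ) + (b : ℚ) = (m : ℚ) := by exact_mod_cast hdm
          have heq : (b : ℚ) * c = s + -((a : ℚ) * k) := by
            rw [hm, hk]
            push_cast at hqc ⊢
            linear_combination c * hqc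
          rw [heq]
          exact h2.1
        have hbz : b = 0 := by
          by_contra hbz
          have hbpos : 0 < b := by omega
          have hmin := Nat.find_min hTne (show b.toNat < m₀ by omega)
          apply hmin
          refine ⟨by omega, ?_⟩
          rw [show ((b.toNat : ℕ) : ℚ) = (b : ℚ) by exact_mod_cast Int.toNat_of_nonneg hb0]
          exact hPb
        refine ⟨a, ?_⟩
        rw [hm, hk]
        have hma : (m : ℚ) = ((m₀ : ℤ) : ℚ) * (a : ℚ) := by
          rw [hbz, add_zero] at hdm
          exact_mod_cast hdm.symm
        rw [hma]
        push_cast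
        ring
      · rintro ⟨i, rfl⟩
        exact (gm_zsmul hf hPk i).1
end

section
/- Let W be a total valuation ring of K with V ⊊ W and J(W)² = J(W). Let I be a nonzero left V-ideal of K with O_l(I) ⊊ W. Then WI is a principal left W-ideal, i.e. WI = Wc for some c ∈ K. -/
open scoped Pointwise

variable {K : Type*} [DivisionRing K]

/-- If `W` is a total valuation ring with `V ⊊ W`, `J(W)² = J(W)`, and `I` is a nonzero left
`V`-ideal with `O_l(I) ⊊ W`, then `WI` is a principal left `W`-ideal. -/
theorem stmt15 (V W : Subring K) (hV : IsTVR V) (hVK : (V : Set K) ≠ Set.univ)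
    (hW : IsTVR W) (hVW : (V : Set K) ⊂ (W : Set K))
    (hJ : aprod (jacS (W : Set K)) (jacS (W : Set K)) = jacS (W : Set K))
    (I : Set K) (hI : IsAddSubgrp I) (hI0 : I ≠ {0}) (hVI : (V : Set K) * I ⊆ I)
    (hOl : Ol I ⊂ (W : Set K)) :
    ∃ c : K, aprod (W : Set K) I = (W : Set K) * {c} := by
  obtain ⟨w, hwW, hwO⟩ := Set.exists_of_ssubset hOl
  simp only [Ol, Set.mem_setOf_eq, not_forall] at hwO
  obtain ⟨x, hxI, hwx⟩ := hwO
  set c := w * x with hc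
  have hc0 : c ≠ 0 := fun h => hwx (by rw [h]; exact hI.1)
  have key : ∀ y ∈ I, y ≠ 0 → y * c⁻¹ ∈ W := by
    intro y hy hy0
    have hk : c * y⁻¹ ≠ 0 := mul_ne_zero hc0 (inv_ne_zero hy0)
    rcases hV _ hk with h | h
    · exfalso
      have h1 : (c * y⁻¹) * y ∈ I := hVI (Set.mul_mem_mul h hy)
      rw [mul_assoc, inv_mul_cancel₀ hy0, mul_one] at h1
      exact hwx h1
    · have h2 : (c * y⁻¹)⁻¹ = y * c⁻¹ := by rw [mul_inv_rev, inv_inv]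
      rw [h2] at h
      exact hVW.subset h
  refine ⟨c, Set.Subset.antisymm ?_ ?_⟩
  · intro z hz
    have hz' : z ∈ AddSubgroup.map (AddMonoidHom.mulRight c) W.toAddSubgroup := by
      refine (AddSubgroup.closure_le _).mpr ?_ hz
      rintro t ⟨u, hu, y, hy, rfl⟩
      by_cases hy0 : y = 0
      · subst hy0
        exact ⟨0, zero_mem _, by simp⟩
      · refine ⟨u * (y * c⁻¹), W.mul_mem hu (key y hy hy0), ?_⟩
        simp only [AddMonoidHom.mulRight_apply]
        rw [mul_assoc, mul_assoc, inv_mul_cancel₀ hc0, mul_one]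
    obtain ⟨a, ha, rfl⟩ := hz'
    exact Set.mul_mem_mul ha rfl
  · rintro z ⟨u, hu, y, hy, rfl⟩
    rcases hy with rfl
    show u * c ∈ aprod (W : Set K) I
    rw [hc, ← mul_assoc]
    exact AddSubgroup.subset_closure (Set.mul_mem_mul (W.mul_mem hu hwW) hxI)
end
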